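/- arXiv:2004.11315 — 6 statements merged into one kernel-verified Lean document; each statement's English description precedes it below -/
import Mathlib

section
/- If x is a simplicial vertex of a finite simple graph G (i.e., the neighborhood of x is a clique), then the minimum fill-in of G equals the minimum fill-in of the elimination graph G_x obtained by deleting x (and adding the missing edges among its neighbors, of which there are none). Equivalently, eliminating x first extends to a minimum fill-in ordering of G. -/
open SimpleGraph

attribute [local instance] Classical.propDecidable

variable {V : Type*} [Fintype V] [DecidableEq V]

/-- The elimination graph `G_x`: delete `x` and complete its neighborhood to a clique.
(The eliminated vertex is kept as an isolated vertex.) -/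
def elimG (G : SimpleGraph V) (x : V) : SimpleGraph V where
  Adj u v := u ≠ v ∧ u ≠ x ∧ v ≠ x ∧ (G.Adj u v ∨ (G.Adj x u ∧ G.Adj x v))
  symm := by
    constructor
    intro u v h
    obtain ⟨h1, h2, h3, h4⟩ := h
    refine ⟨h1.symm, h3, h2, ?_⟩
    rcases h4 with h | ⟨h4, h5⟩
    · exact Or.inl h.symm
    · exact Or.inr ⟨h5, h4⟩
  loopless := by constructor; intro v h; exact h.1 rfl

/-- The deficiency `D(x)`: the set of unordered pairs of distinct, non-adjacent
neighbors of `x`. -/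
noncomputable def deficiencyFinset (G : SimpleGraph V) (x : V) : Finset (Sym2 V) :=
  ((Finset.univ ×ˢ Finset.univ : Finset (V × V)).filter
    (fun p => p.1 ≠ p.2 ∧ G.Adj x p.1 ∧ G.Adj x p.2 ∧ ¬ G.Adj p.1 p.2)).image
    (fun p => s(p.1, p.2))

/-- Successive elimination of a list of vertices. -/
def elimList : SimpleGraph V → List V → SimpleGraph V
  | G, [] => G
  | G, x :: xs => elimList (elimG G x) xs

/-- The fill-in of an elimination ordering given as a list: the total number of
edges added during the elimination process. -/
noncomputable def fillList : SimpleGraph V → List V → ℕ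
  | _, [] => 0
  | G, x :: xs => (deficiencyFinset G x).card + fillList (elimG G x) xs

/-- The set of fill edges added during the elimination process. -/
noncomputable def fillEdges : SimpleGraph V → List V → Finset (Sym2 V)
  | _, [] => ∅
  | G, x :: xs => deficiencyFinset G x ∪ fillEdges (elimG G x) xs

/-- A list is an (elimination) ordering if it enumerates every vertex exactly once. -/
def IsOrdering (L : List V) : Prop := L.Nodup ∧ ∀ v : V, v ∈ L

/-- The minimum fill-in `Φ(G)`. -/
noncomputable def minFillIn (G : SimpleGraph V) : ℕ :=
  sInf {n | ∃ L : List V, IsOrdering L ∧ fillList G L = n}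

/-- A vertex is simplicial if its neighborhood is a clique. -/
def IsSimplicial (G : SimpleGraph V) (x : V) : Prop :=
  ∀ a b, G.Adj x a → G.Adj x b → a ≠ b → G.Adj a b

/-- `a` and `b` are indistinguishable: equal closed neighborhoods. -/
def Indistinguishable (G : SimpleGraph V) (a b : V) : Prop :=
  a ≠ b ∧ insert a (G.neighborSet a) = insert b (G.neighborSet b)

/-- `a` and `b` are twins: equal open neighborhoods (hence non-adjacent). -/
def Twins (G : SimpleGraph V) (a b : V) : Prop :=
  a ≠ b ∧ G.neighborSet a = G.neighborSet b

/-- Chordality: no induced cycle of length at least 4, equivalently every cycle of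
length at least 4 has a chord. -/
def IsChordal (G : SimpleGraph V) : Prop :=
  ∀ n : ℕ, 4 ≤ n → ∀ f : ZMod n → V, Function.Injective f →
    ¬ (∀ i j : ZMod n, G.Adj (f i) (f j) ↔ (j = i + 1 ∨ i = j + 1))

/-- `T` is a triangulation of `G`: a set of non-edges whose addition makes `G` chordal. -/
def IsTriangulation (G : SimpleGraph V) (T : Finset (Sym2 V)) : Prop :=
  (∀ e ∈ T, ¬ e.IsDiag ∧ e ∉ G.edgeSet) ∧
    IsChordal (G ⊔ SimpleGraph.fromEdgeSet (↑T : Set (Sym2 V)))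

/-- A minimum triangulation. -/
def IsMinTriangulation (G : SimpleGraph V) (T : Finset (Sym2 V)) : Prop :=
  IsTriangulation G T ∧ ∀ T' : Finset (Sym2 V), IsTriangulation G T' → T.card ≤ T'.card

/-- The graph obtained from `G` by deleting the vertices in `S`
(deleted vertices are kept as isolated vertices). -/
def deleteSet (G : SimpleGraph V) (S : Set V) : SimpleGraph V where
  Adj u v := G.Adj u v ∧ u ∉ S ∧ v ∉ S
  symm := ⟨fun _ _ ⟨h, hu, hv⟩ => ⟨h.symm, hv, hu⟩⟩
  loopless := ⟨fun v h => G.irrefl h.1⟩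

lemma elimG_adj {G : SimpleGraph V} {x u v : V} :
    (elimG G x).Adj u v ↔ u ≠ v ∧ u ≠ x ∧ v ≠ x ∧ (G.Adj u v ∨ (G.Adj x u ∧ G.Adj x v)) :=
  Iff.rfl

lemma mem_deficiencyFinset {G : SimpleGraph V} {x : V} {e : Sym2 V} :
    e ∈ deficiencyFinset G x ↔
      ∃ u v : V, (u ≠ v ∧ G.Adj x u ∧ G.Adj x v ∧ ¬ G.Adj u v) ∧ e = s(u, v) := by
  simp only [deficiencyFinset, Finset.mem_image, Finset.mem_filter, Finset.mem_product,
    Finset.mem_univ, true_and, Prod.exists]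
  constructor
  · rintro ⟨u, v, h, rfl⟩; exact ⟨u, v, h, rfl⟩
  · rintro ⟨u, v, h, rfl⟩; exact ⟨u, v, h, rfl⟩

lemma deficiencyFinset_eq_empty {G : SimpleGraph V} {x : V} (hx : IsSimplicial G x) :
    deficiencyFinset G x = ∅ := by
  ext e
  simp only [mem_deficiencyFinset, Finset.notMem_empty, iff_false]
  rintro ⟨u, v, ⟨huv, hu, hv, hnadj⟩, rfl⟩
  exact hnadj (hx u v hu hv huv)

lemma elimG_adj_of_simplicial {G : SimpleGraph V} {x : V} (hx : IsSimplicial G x) {u v : V} :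
    (elimG G x).Adj u v ↔ u ≠ v ∧ u ≠ x ∧ v ≠ x ∧ G.Adj u v := by
  rw [elimG_adj]
  refine and_congr_right fun h1 => and_congr_right fun _ => and_congr_right fun _ => ?_
  constructor
  · rintro (h | ⟨ha, hb⟩)
    · exact h
    · exact hx u v ha hb h1
  · exact Or.inl

lemma elimG_not_adj_self {G : SimpleGraph V} {x u : V} : ¬ (elimG G x).Adj x u :=
  fun h => h.2.1 rfl

lemma isolated_simplicial {G : SimpleGraph V} {x : V} (h : ∀ u, ¬ G.Adj x u) :
    IsSimplicial G x := fun a _ ha _ _ => absurd ha (h a)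

lemma elimG_eq_of_isolated {G : SimpleGraph V} {x : V} (h : ∀ u, ¬ G.Adj x u) :
    elimG G x = G := by
  ext u v
  rw [elimG_adj]
  constructor
  · rintro ⟨_, _, _, h4 | ⟨ha, _⟩⟩
    · exact h4
    · exact absurd ha (h u)
  · intro hadj
    refine ⟨hadj.ne, ?_, ?_, Or.inl hadj⟩
    · rintro rfl; exact h v hadj
    · rintro rfl; exact h u hadj.symm

lemma isolated_elimG {G : SimpleGraph V} {x y : V} (h : ∀ u, ¬ G.Adj x u) (u : V) :
    ¬ (elimG G y).Adj x u := by
  rintro ⟨_, _, _, h4 | ⟨ha, _⟩⟩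
  · exact h u h4
  · exact h y ha.symm

lemma fillList_cons (G : SimpleGraph V) (y : V) (L : List V) :
    fillList G (y :: L) = (deficiencyFinset G y).card + fillList (elimG G y) L := rfl

lemma fillList_erase {x : V} : ∀ (L : List V) (G : SimpleGraph V), (∀ u, ¬ G.Adj x u) →
    fillList G L = fillList G (L.erase x)
  | [], _, _ => rfl
  | y :: L, G, h => by
    by_cases hxy : y = x
    · subst hxy
      rw [List.erase_cons_head, fillList_cons,
        deficiencyFinset_eq_empty (isolated_simplicial h), Finset.card_empty,
        elimG_eq_of_isolated h, zero_add]
    · have : (y :: L).erase x = y :: L.erase x := by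
        simp [List.erase_cons, hxy]
      rw [this, fillList_cons, fillList_cons,
        fillList_erase L (elimG G y) (isolated_elimG h)]

lemma simplicial_elimG {G : SimpleGraph V} {x y : V} (hx : IsSimplicial G x) :
    IsSimplicial (elimG G y) x := by
  intro a b ha hb hab
  obtain ⟨hxa, hxy, hay, ha'⟩ := ha
  obtain ⟨hxb, _, hby, hb'⟩ := hb
  refine ⟨hab, hay, hby, ?_⟩
  rcases ha' with pa | ⟨qyx, qya⟩
  · rcases hb' with pb | ⟨qyx, qyb⟩
    · exact Or.inl (hx a b pa pb hab)
    · exact Or.inr ⟨(hx a y pa qyx.symm hay).symm, qyb⟩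
  · rcases hb' with pb | ⟨_, qyb⟩
    · exact Or.inr ⟨qya, (hx b y pb qyx.symm hby).symm⟩
    · exact Or.inr ⟨qya, qyb⟩

lemma elimG_comm {G : SimpleGraph V} {x y : V} (hx : IsSimplicial G x) (hxy : y ≠ x) :
    elimG (elimG G x) y = elimG (elimG G y) x := by
  have key2 : ∀ u v, (elimG (elimG G x) y).Adj u v ↔
      u ≠ v ∧ u ≠ x ∧ v ≠ x ∧ u ≠ y ∧ v ≠ y ∧ (G.Adj u v ∨ (G.Adj y u ∧ G.Adj y v)) := by
    intro u v
    constructor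
    · rintro ⟨huv, huy, hvy, h | ⟨h1, h2⟩⟩
      · rw [elimG_adj_of_simplicial hx] at h
        exact ⟨huv, h.2.1, h.2.2.1, huy, hvy, Or.inl h.2.2.2⟩
      · rw [elimG_adj_of_simplicial hx] at h1 h2
        exact ⟨huv, h1.2.2.1, h2.2.2.1, huy, hvy, Or.inr ⟨h1.2.2.2, h2.2.2.2⟩⟩
    · rintro ⟨huv, hux, hvx, huy, hvy, hG | ⟨h1, h2⟩⟩
      · exact ⟨huv, huy, hvy, Or.inl ((elimG_adj_of_simplicial hx).2 ⟨huv, hux, hvx, hG⟩)⟩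
      · exact ⟨huv, huy, hvy, Or.inr
          ⟨(elimG_adj_of_simplicial hx).2 ⟨h1.ne, hxy, hux, h1⟩,
           (elimG_adj_of_simplicial hx).2 ⟨h2.ne, hxy, hvx, h2⟩⟩⟩
  have key : ∀ u v, (elimG (elimG G y) x).Adj u v ↔
      u ≠ v ∧ u ≠ x ∧ v ≠ x ∧ u ≠ y ∧ v ≠ y ∧ (G.Adj u v ∨ (G.Adj y u ∧ G.Adj y v)) := by
    intro u v
    constructor
    · rintro ⟨huv, hux, hvx, h | ⟨h1, h2⟩⟩
      · obtain ⟨_, huy, hvy, hG⟩ := h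
        exact ⟨huv, hux, hvx, huy, hvy, hG⟩
      · obtain ⟨hxu, _, huy, p1⟩ := h1
        obtain ⟨hxv, _, hvy, p2⟩ := h2
        refine ⟨huv, hux, hvx, huy, hvy, ?_⟩
        rcases p1 with a1 | ⟨b1, b2⟩
        · rcases p2 with a2 | ⟨c1, c2⟩
          · exact Or.inl (hx u v a1 a2 huv)
          · exact Or.inr ⟨(hx u y a1 c1.symm huy).symm, c2⟩
        · rcases p2 with a2 | ⟨c1, c2⟩
          · exact Or.inr ⟨b2, (hx v y a2 b1.symm hvy).symm⟩
          · exact Or.inr ⟨b2, c2⟩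
    · rintro ⟨huv, hux, hvx, huy, hvy, q⟩
      exact ⟨huv, hux, hvx, Or.inl ⟨huv, huy, hvy, q⟩⟩
  ext u v
  rw [key2 u v, key u v]

lemma deficiency_elimG_subset {G : SimpleGraph V} {x y : V} (hx : IsSimplicial G x) :
    deficiencyFinset (elimG G x) y ⊆ deficiencyFinset G y := by
  intro e he
  rw [mem_deficiencyFinset] at he ⊢
  obtain ⟨u, v, ⟨huv, hu, hv, hnadj⟩, rfl⟩ := he
  rw [elimG_adj_of_simplicial hx] at hu hv
  refine ⟨u, v, ⟨huv, hu.2.2.2, hv.2.2.2, fun h => hnadj ?_⟩, rfl⟩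
  exact (elimG_adj_of_simplicial hx).2 ⟨huv, hu.2.2.1, hv.2.2.1, h⟩

lemma fillList_elimG_le {x : V} : ∀ (L : List V) (G : SimpleGraph V), IsSimplicial G x →
    fillList (elimG G x) L ≤ fillList G L
  | [], _, _ => le_refl 0
  | y :: L, G, hx => by
    by_cases hyx : y = x
    · subst hyx
      rw [fillList_cons, fillList_cons,
        deficiencyFinset_eq_empty (isolated_simplicial fun u => elimG_not_adj_self),
        deficiencyFinset_eq_empty hx,
        elimG_eq_of_isolated fun u => elimG_not_adj_self]
    · rw [fillList_cons, fillList_cons, elimG_comm hx hyx]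
      exact Nat.add_le_add (Finset.card_le_card (deficiency_elimG_subset hx))
        (fillList_elimG_le L (elimG G y) (simplicial_elimG hx))

/-- if `x` is simplicial in `G`, then `Φ(G) = Φ(G_x)`; equivalently,
eliminating `x` first extends to a minimum fill-in ordering of `G`. -/
theorem stmt_0 (G : SimpleGraph V) (x : V) (hx : IsSimplicial G x) :
    minFillIn G = minFillIn (elimG G x) ∧
    ∃ L : List V, IsOrdering (x :: L) ∧ fillList G (x :: L) = minFillIn G := by
  classical
  have hex : ∀ (H : SimpleGraph V),
      {n | ∃ L : List V, IsOrdering L ∧ fillList H L = n}.Nonempty := fun H =>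
    ⟨_, Finset.univ.toList, ⟨Finset.nodup_toList _, fun v => by simp⟩, rfl⟩
  have hiso : ∀ u, ¬ (elimG G x).Adj x u := fun u => elimG_not_adj_self
  obtain ⟨L, hL, hLval⟩ := Nat.sInf_mem (hex (elimG G x))
  set L' := L.erase x with hL'
  have hord : IsOrdering (x :: L') := by
    constructor
    · exact List.nodup_cons.2 ⟨hL.1.not_mem_erase, hL.1.erase x⟩
    · intro v
      by_cases hv : v = x
      · exact hv ▸ (List.mem_cons_self : x ∈ x :: L')
      · exact List.mem_cons_of_mem _ ((List.mem_erase_of_ne hv).2 (hL.2 v))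
  have hfill : fillList G (x :: L') = minFillIn (elimG G x) := by
    rw [fillList_cons, deficiencyFinset_eq_empty hx, Finset.card_empty, zero_add,
      ← fillList_erase L (elimG G x) hiso, hLval]
    rfl
  have h1 : minFillIn G ≤ minFillIn (elimG G x) :=
    Nat.sInf_le ⟨x :: L', hord, hfill⟩
  have h2 : minFillIn (elimG G x) ≤ minFillIn G := by
    obtain ⟨M, hM, hMval⟩ := Nat.sInf_mem (hex G)
    calc minFillIn (elimG G x) ≤ fillList (elimG G x) M := Nat.sInf_le ⟨M, hM, rfl⟩
      _ ≤ fillList G M := fillList_elimG_le M G hx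
      _ = minFillIn G := hMval
  have heq : minFillIn G = minFillIn (elimG G x) := le_antisymm h1 h2
  exact ⟨heq, L', hord, hfill.trans heq.symm⟩
end

section
/- If a and b are indistinguishable vertices in a graph G (i.e., their closed neighborhoods coincide: Γ[a] = Γ[b]), and a vertex x different from a and b is eliminated, then a and b are indistinguishable in the elimination graph G_x. -/
open SimpleGraph

attribute [local instance] Classical.propDecidable

variable {V : Type*} [Fintype V] [DecidableEq V]

/-- indistinguishable vertices remain indistinguishable after eliminating
any other vertex. -/
theorem stmt_3 (G : SimpleGraph V) (a b x : V) (h : Indistinguishable G a b)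
    (hxa : x ≠ a) (hxb : x ≠ b) :
    Indistinguishable (elimG G x) a b := by
  obtain ⟨hab, hset⟩ := h
  have key : ∀ v, (v = a ∨ G.Adj a v) ↔ (v = b ∨ G.Adj b v) := by
    intro v
    have := Set.ext_iff.mp hset v
    simpa [SimpleGraph.mem_neighborSet, adj_comm] using this
  have hxab : G.Adj x a ↔ G.Adj x b := by
    have := key x
    simp only [eq_comm (a := x)] at this
    constructor
    · intro hx
      rcases this.mp (Or.inr hx.symm) with h1 | h1
      · exact absurd h1 hxb.symm
      · exact h1.symm
    · intro hx
      rcases this.mpr (Or.inr hx.symm) with h1 | h1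
      · exact absurd h1 hxa.symm
      · exact h1.symm
  refine ⟨hab, ?_⟩
  ext v
  simp only [Set.mem_insert_iff, SimpleGraph.mem_neighborSet, elimG]
  constructor
  · rintro (rfl | ⟨h1, h2, h3, h4⟩)
    · right
      refine ⟨hab.symm, hxb.symm, hxa.symm, ?_⟩
      rcases (key b).mpr (Or.inl rfl) with h | h
      · exact absurd h hab.symm
      · exact Or.inl h.symm
    · by_cases hvb : v = b
      · exact Or.inl hvb
      right
      refine ⟨Ne.symm hvb, hxb.symm, h3, ?_⟩
      rcases h4 with h | ⟨h5, h6⟩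
      · rcases (key v).mp (Or.inr h) with h' | h'
        · exact absurd h' hvb
        · exact Or.inl h'
      · exact Or.inr ⟨hxab.mp h5, h6⟩
  · rintro (rfl | ⟨h1, h2, h3, h4⟩)
    · right
      refine ⟨hab, hxa.symm, hxb.symm, ?_⟩
      rcases (key a).mp (Or.inl rfl) with h | h
      · exact absurd h hab
      · exact Or.inl h.symm
    · by_cases hva : v = a
      · exact Or.inl hva
      right
      refine ⟨Ne.symm hva, hxa.symm, h3, ?_⟩
      rcases h4 with h | ⟨h5, h6⟩
      · rcases (key v).mpr (Or.inr h) with h' | h'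
        · exact absurd h' hva
        · exact Or.inl h'
      · exact Or.inr ⟨hxab.mpr h5, h6⟩
end

section
/- If a and b are twin vertices in a graph G (Γ(a) = Γ(b), in particular a and b are non-adjacent), and a vertex x not equal to a or b is eliminated, then in the elimination graph G_x the vertices a and b are either twins or indistinguishable (the latter occurring exactly when x was a common neighbor of a and b). -/
open SimpleGraph

attribute [local instance] Classical.propDecidable

variable {V : Type*} [Fintype V] [DecidableEq V]

/-- twins remain twins after eliminating any other vertex, unless that
vertex is a common neighbor, in which case they become indistinguishable. -/
theorem stmt_4 (G : SimpleGraph V) (a b x : V) (h : Twins G a b)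
    (hxa : x ≠ a) (hxb : x ≠ b) :
    (G.Adj x a ∧ G.Adj x b → Indistinguishable (elimG G x) a b) ∧
    (¬ (G.Adj x a ∧ G.Adj x b) → Twins (elimG G x) a b) := by
  obtain ⟨hab, hN⟩ := h
  have hadj : ∀ v, G.Adj a v ↔ G.Adj b v := by
    intro v
    constructor
    · intro hv; have : v ∈ G.neighborSet b := hN ▸ hv; exact this
    · intro hv; have : v ∈ G.neighborSet a := hN.symm ▸ hv; exact this
  have hx : G.Adj x a ↔ G.Adj x b := by
    rw [G.adj_comm x a, G.adj_comm x b]; exact hadj x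
  constructor
  · rintro ⟨hxa', hxb'⟩
    refine ⟨hab, ?_⟩
    have hAB : (elimG G x).Adj a b :=
      ⟨hab, fun h => hxa h.symm, fun h => hxb h.symm, Or.inr ⟨hxa', hxb'⟩⟩
    ext v
    simp only [Set.mem_insert_iff, mem_neighborSet]
    constructor
    · rintro (rfl | hv)
      · exact Or.inr hAB.symm
      · by_cases hvb : v = b
        · exact Or.inl hvb
        · refine Or.inr ?_
          obtain ⟨h1, h2, h3, h4⟩ := hv
          exact ⟨Ne.symm hvb, fun h => hxb h.symm, h3,
            by rcases h4 with h | ⟨_, h5⟩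
               · exact Or.inl ((hadj v).mp h)
               · exact Or.inr ⟨hxb', h5⟩⟩
    · rintro (rfl | hv)
      · exact Or.inr hAB
      · by_cases hva : v = a
        · exact Or.inl hva
        · refine Or.inr ?_
          obtain ⟨h1, h2, h3, h4⟩ := hv
          exact ⟨Ne.symm hva, fun h => hxa h.symm, h3,
            by rcases h4 with h | ⟨_, h5⟩
               · exact Or.inl ((hadj v).mpr h)
               · exact Or.inr ⟨hxa', h5⟩⟩
  · intro hnot
    have hxa' : ¬ G.Adj x a := fun h => hnot ⟨h, hx.mp h⟩
    have hxb' : ¬ G.Adj x b := fun h => hnot ⟨hx.mpr h, h⟩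
    refine ⟨hab, ?_⟩
    ext v
    simp only [mem_neighborSet]
    constructor
    · rintro ⟨h1, h2, h3, h4⟩
      rcases h4 with h | ⟨h5, _⟩
      · have hb := (hadj v).mp h
        exact ⟨hb.ne, fun h => hxb h.symm, h3, Or.inl hb⟩
      · exact absurd h5 hxa'
    · rintro ⟨h1, h2, h3, h4⟩
      rcases h4 with h | ⟨h5, _⟩
      · have ha := (hadj v).mpr h
        exact ⟨ha.ne, fun h => hxa h.symm, h3, Or.inl ha⟩
      · exact absurd h5 hxb'
end

section
/- Let G be a graph with a separation clique S (a clique whose removal disconnects G) with connected components C_1,…,C_k of G − S. Then any minimum triangulation T of G contains only edges whose endpoints both lie in the same component C_j, or edges joining a vertex of some C_j to a vertex of S. In particular no edge of T joins two different components, and no edge of T joins two vertices of S. -/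
open SimpleGraph

attribute [local instance] Classical.propDecidable

variable {V : Type*} [Fintype V] [DecidableEq V]

/-- if `S` is a separation clique of `G`, then every edge of a minimum
triangulation `T` either has both endpoints in the same component of `G - S`, or
joins a component vertex to a vertex of `S`; in particular no edge of `T` joins two
different components and no edge of `T` joins two vertices of `S`. -/
theorem stmt_9 (G : SimpleGraph V) (S : Set V) (T : Finset (Sym2 V))
    (hclique : G.IsClique S)
    (hdisc : ∃ u v : V, u ∉ S ∧ v ∉ S ∧ ¬ (deleteSet G S).Reachable u v)
    (hT : IsMinTriangulation G T) :
    ∀ u v : V, s(u, v) ∈ T →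
      ¬ (u ∈ S ∧ v ∈ S) ∧ (u ∉ S → v ∉ S → (deleteSet G S).Reachable u v) := by
    classical
  set T' : Finset (Sym2 V) := T.filter (fun e => ∀ u v : V, e = s(u, v) → u ∉ S → v ∉ S →
    (deleteSet G S).Reachable u v) with hT'def
  have hsub : T' ⊆ T := Finset.filter_subset _ _
  have htri' : IsTriangulation G T' := by
    constructor
    · intro e he; exact hT.1.1 e (hsub he)
    · intro n hn f hf hiff
      haveI : NeZero n := ⟨by omega⟩
      have hRstep : ∀ i : ZMod n, f i ∉ S → f (i + 1) ∉ S →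
          (deleteSet G S).Reachable (f i) (f (i + 1)) := by
        intro i h1 h2
        have hadj := (hiff i (i + 1)).mpr (Or.inl rfl)
        rw [SimpleGraph.sup_adj] at hadj
        rcases hadj with hg | ht
        · exact SimpleGraph.Adj.reachable (show (deleteSet G S).Adj _ _ from ⟨hg, h1, h2⟩)
        · rw [SimpleGraph.fromEdgeSet_adj] at ht
          have hmem := ht.1
          rw [Finset.mem_coe, hT'def, Finset.mem_filter] at hmem
          exact hmem.2 (f i) (f (i + 1)) rfl h1 h2
      have chain : ∀ m : ℕ, ∀ i : ZMod n, (∀ k : ℕ, k ≤ m → f (i + (k : ZMod n)) ∉ S) →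
          (deleteSet G S).Reachable (f i) (f (i + (m : ZMod n))) := by
        intro m
        induction m with
        | zero => intro i h; simpa using SimpleGraph.Reachable.refl (f i)
        | succ m ih =>
          intro i h
          have h1 := ih i (fun k hk => h k (le_trans hk (Nat.le_succ m)))
          have e : i + ((m + 1 : ℕ) : ZMod n) = (i + (m : ZMod n)) + 1 := by push_cast; ring
          have h2 : f ((i + (m : ZMod n)) + 1) ∉ S := by rw [← e]; exact h (m + 1) le_rfl
          rw [e]
          exact h1.trans (hRstep (i + (m : ZMod n)) (h m (Nat.le_succ m)) h2)
      have cast_inj : ∀ x y : ℕ, x < n → y < n → (x : ZMod n) = (y : ZMod n) → x = y := by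
        intro x y hx hy h
        have := congrArg ZMod.val h
        rwa [ZMod.val_cast_of_lt hx, ZMod.val_cast_of_lt hy] at this
      by_cases hNC : ∀ a b : ZMod n, f a ∈ S → f b ∈ S → a = b ∨ b = a + 1 ∨ a = b + 1
      · -- no two nonconsecutive cycle indices are in S
        have claim : ∀ i j : ZMod n, f i ∉ S → f j ∉ S →
            (deleteSet G S).Reachable (f i) (f j) := by
          intro i j hi hj
          by_cases hij : j = i
          · subst hij; exact SimpleGraph.Reachable.refl _
          set m : ℕ := (j - i).val with hm
          have hjm : i + (m : ZMod n) = j := by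
            rw [hm, ZMod.natCast_val, ZMod.cast_id]; ring
          by_cases hA : ∀ k : ℕ, k ≤ m → f (i + (k : ZMod n)) ∉ S
          · have := chain m i hA; rwa [hjm] at this
          push_neg at hA
          obtain ⟨k, hk, hkS⟩ := hA
          set m' : ℕ := (i - j).val with hm'
          have him : j + (m' : ZMod n) = i := by
            rw [hm', ZMod.natCast_val, ZMod.cast_id]; ring
          by_cases hB : ∀ k : ℕ, k ≤ m' → f (j + (k : ZMod n)) ∉ S
          · have := chain m' j hB; rw [him] at this; exact this.symm
          push_neg at hB
          obtain ⟨k', hk', hk'S⟩ := hB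
          exfalso
          have hmn : m < n := ZMod.val_lt _
          have hm'n : m' < n := ZMod.val_lt _
          have hji0 : (j - i) ≠ 0 := sub_ne_zero.mpr hij
          have hm0 : m ≠ 0 := fun h0 => hji0 (ZMod.val_eq_zero _ |>.mp h0)
          have hmm' : m' = n - m := by
            have hneg : i - j = -(j - i) := by ring
            rw [hm', hneg, ZMod.neg_val, if_neg hji0]
          have hk0 : k ≠ 0 := by
            rintro rfl; simp only [Nat.cast_zero, add_zero] at hkS; exact hi hkS
          have hkm : k ≠ m := by rintro rfl; rw [hjm] at hkS; exact hj hkS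
          have hk'0 : k' ≠ 0 := by
            rintro rfl; simp only [Nat.cast_zero, add_zero] at hk'S; exact hj hk'S
          have hk'm' : k' ≠ m' := by rintro rfl; rw [him] at hk'S; exact hi hk'S
          have hklt : k < m := lt_of_le_of_ne hk hkm
          have hk'lt : k' < m' := lt_of_le_of_ne hk' hk'm'
          have h1 := hNC (i + (k : ZMod n)) (j + (k' : ZMod n)) hkS hk'S
          have hrw : j + (k' : ZMod n) = i + ((m + k' : ℕ) : ZMod n) := by
            rw [← hjm]; push_cast; ring
          rw [hrw] at h1
          have hmk'n : m + k' < n := by omega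
          rcases h1 with h1 | h1 | h1
          · have := cast_inj k (m + k') (by omega) hmk'n (by
              have := add_left_cancel h1; exact this)
            omega
          · have h2 : i + ((m + k' : ℕ) : ZMod n) = i + ((k + 1 : ℕ) : ZMod n) := by
              rw [h1]; push_cast; ring
            have := cast_inj (m + k') (k + 1) hmk'n (by omega) (add_left_cancel h2)
            omega
          · have h2 : i + ((k : ℕ) : ZMod n) = i + ((m + k' + 1 : ℕ) : ZMod n) := by
              rw [h1]; push_cast; ring
            have h3 := add_left_cancel h2
            rcases Nat.lt_or_ge (m + k' + 1) n with hlt | hge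
            · have := cast_inj k (m + k' + 1) (by omega) hlt h3
              omega
            · have hn' : m + k' + 1 = n := by omega
              rw [hn'] at h3
              rw [ZMod.natCast_self] at h3
              have := cast_inj k 0 (by omega) (by omega) (by rw [h3]; simp)
              omega
        -- transfer: the cycle is chordless in G ⊔ T as well, contradiction
        have hiffH : ∀ i j : ZMod n,
            (G ⊔ SimpleGraph.fromEdgeSet (↑T : Set (Sym2 V))).Adj (f i) (f j) ↔
              (j = i + 1 ∨ i = j + 1) := by
          intro i j
          constructor
          · intro h
            apply (hiff i j).mp
            rw [SimpleGraph.sup_adj] at h ⊢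
            rcases h with h | h
            · exact Or.inl h
            · right
              rw [SimpleGraph.fromEdgeSet_adj] at h ⊢
              refine ⟨?_, h.2⟩
              rw [Finset.mem_coe, hT'def, Finset.mem_filter]
              refine ⟨Finset.mem_coe.mp h.1, ?_⟩
              intro u v huv hu hv
              rcases Sym2.eq_iff.mp huv with ⟨h1, h2⟩ | ⟨h1, h2⟩
              · rw [← h1, ← h2]
                exact claim i j (by rw [h1]; exact hu) (by rw [h2]; exact hv)
              · rw [← h1, ← h2]
                exact claim j i (by rw [h2]; exact hu) (by rw [h1]; exact hv)
          · intro h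
            have h2 := (hiff i j).mpr h
            rw [SimpleGraph.sup_adj] at h2 ⊢
            rcases h2 with h2 | h2
            · exact Or.inl h2
            · right
              rw [SimpleGraph.fromEdgeSet_adj] at h2 ⊢
              exact ⟨Finset.mem_coe.mpr (hsub (Finset.mem_coe.mp h2.1)), h2.2⟩
        exact hT.1.2 n hn f hf hiffH
      · -- two nonconsecutive indices in S: chord from the clique
        push_neg at hNC
        obtain ⟨a, b, ha, hb, hab⟩ := hNC
        have hfab : f a ≠ f b := fun h => hab.1 (hf h)
        have hadj : (G ⊔ SimpleGraph.fromEdgeSet (↑T' : Set (Sym2 V))).Adj (f a) (f b) :=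
          SimpleGraph.sup_adj _ _ _ _ |>.mpr (Or.inl (hclique ha hb hfab))
        rcases (hiff a b).mp hadj with h | h
        · exact hab.2.1 h
        · exact hab.2.2 h
  have heq : T' = T := Finset.eq_of_subset_of_card_le hsub (hT.2 T' htri')
  intro u v huv
  constructor
  · rintro ⟨hu, hv⟩
    have h1 := hT.1.1 _ huv
    have hne : u ≠ v := fun h => h1.1 (Sym2.mk_isDiag_iff.mpr h)
    exact h1.2 ((SimpleGraph.mem_edgeSet G).mpr (hclique hu hv hne))
  · intro hu hv
    rw [← heq, hT'def, Finset.mem_filter] at huv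
    exact huv.2 u v rfl hu hv
end

section
/- If C is a cycle graph on n ≥ 3 vertices, then every elimination ordering of C has the same fill-in, namely max(n − 3, 0); in particular every ordering of a cycle is a minimum fill-in ordering. -/
open SimpleGraph

attribute [local instance] Classical.propDecidable

variable {V : Type*} [Fintype V] [DecidableEq V]

-- ###### AUX START ######

def relnat (m a b : ℕ) : Prop :=
  b = a + 1 ∨ a = b + 1 ∨ (a = 0 ∧ b = m - 1) ∨ (b = 0 ∧ a = m - 1)

def IsCyc (G : SimpleGraph V) (m : ℕ) (f : ℕ → V) : Prop :=
  3 ≤ m ∧ (∀ a b, a < m → b < m → f a = f b → a = b) ∧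
    ∀ u v, G.Adj u v ↔ ∃ a b, a < m ∧ b < m ∧ u = f a ∧ v = f b ∧ relnat m a b

lemma mod_rep {x m : ℕ} (hm : 0 < m) (hx : x < 2 * m) :
    x % m < m ∧ (x % m = x ∨ x % m + m = x) := by
  refine ⟨Nat.mod_lt _ hm, ?_⟩
  rcases Nat.lt_or_ge x m with h | h
  · left; exact Nat.mod_eq_of_lt h
  · right
    rw [Nat.mod_eq_sub_mod h, Nat.mod_eq_of_lt (by omega)]
    omega

lemma IsCyc.nbr {G : SimpleGraph V} {m : ℕ} {f : ℕ → V} (h : IsCyc G m f) {i : ℕ}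
    (hi : i < m) {u : V} (hu : G.Adj (f i) u) :
    ∃ j, j < m ∧ j ≠ i ∧ u = f j ∧ relnat m i j := by
  obtain ⟨hm, hinj, hadj⟩ := h
  obtain ⟨a, b, ha, hb, hfa, hfb, hr⟩ := (hadj _ _).1 hu
  have hai : a = i := hinj a i ha hi hfa.symm
  subst hai
  exact ⟨b, hb, fun e => hu.ne (hfb.trans (by rw [e])).symm, hfb, hr⟩

lemma elim_index {m i j : ℕ} (hm : 0 < m) (hi : i < m) (hj : j < m) (hij : j ≠ i) :
    ∃ a, a < m - 1 ∧ (i + 1 + a) % m = j := by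
  set a := (j + (m - 1 - i)) % m with hadef
  have ham : a < m := Nat.mod_lt _ hm
  have key : (i + 1 + a) % m = j := by
    have h1 : (i + 1 + a) % m = (i + 1 + (j + (m - 1 - i))) % m := by
      rw [hadef, Nat.add_mod_mod]
    have h2 : i + 1 + (j + (m - 1 - i)) = j + m := by omega
    rw [h1, h2, Nat.add_mod_right, Nat.mod_eq_of_lt hj]
  have hne : a ≠ m - 1 := by
    intro he
    apply hij
    rw [← key, he]
    have : i + 1 + (m - 1) = i + m := by omega
    rw [this, Nat.add_mod_right, Nat.mod_eq_of_lt hi]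
  exact ⟨a, by omega, key⟩

lemma IsCyc.elim {G : SimpleGraph V} {m : ℕ} {f : ℕ → V} (h : IsCyc G m f) (hm4 : 4 ≤ m)
    {i : ℕ} (hi : i < m) :
    IsCyc (elimG G (f i)) (m - 1) (fun j => f ((i + 1 + j) % m)) := by
  obtain ⟨hm, hinj, hadj⟩ := h
  have hm0 : 0 < m := by omega
  refine ⟨by omega, ?_, ?_⟩
  · intro a b ha hb hfab
    have h1 : (i + 1 + a) % m = (i + 1 + b) % m :=
      hinj _ _ (Nat.mod_lt _ hm0) (Nat.mod_lt _ hm0) hfab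
    have r1 := mod_rep hm0 (show i + 1 + a < 2 * m by omega)
    have r2 := mod_rep hm0 (show i + 1 + b < 2 * m by omega)
    omega
  · intro u v
    rw [elimG_adj]
    constructor
    · rintro ⟨huv, hux, hvx, hG | ⟨hxu, hxv⟩⟩
      · obtain ⟨p, q, hp, hq, rfl, rfl, hr⟩ := (hadj u v).1 hG
        have hpi : p ≠ i := fun e => hux (by rw [e])
        have hqi : q ≠ i := fun e => hvx (by rw [e])
        obtain ⟨a, ha, hpa⟩ := elim_index hm0 hi hp hpi
        obtain ⟨b, hb, hqb⟩ := elim_index hm0 hi hq hqi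
        refine ⟨a, b, ha, hb, by dsimp only; rw [hpa], by dsimp only; rw [hqb], ?_⟩
        rw [← hpa, ← hqb] at hr
        have ra := mod_rep hm0 (show i + 1 + a < 2 * m by omega)
        have rb := mod_rep hm0 (show i + 1 + b < 2 * m by omega)
        unfold relnat at hr ⊢
        omega
      · obtain ⟨j, hj, hji, rfl, hrj⟩ := IsCyc.nbr ⟨hm, hinj, hadj⟩ hi hxu
        obtain ⟨k, hk, hki, rfl, hrk⟩ := IsCyc.nbr ⟨hm, hinj, hadj⟩ hi hxv
        have hjk : j ≠ k := fun e => huv (by rw [e])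
        obtain ⟨a, ha, hja⟩ := elim_index hm0 hi hj hji
        obtain ⟨b, hb, hkb⟩ := elim_index hm0 hi hk hki
        refine ⟨a, b, ha, hb, by dsimp only; rw [hja], by dsimp only; rw [hkb], ?_⟩
        have ra := mod_rep hm0 (show i + 1 + a < 2 * m by omega)
        have rb := mod_rep hm0 (show i + 1 + b < 2 * m by omega)
        unfold relnat at hrj hrk ⊢
        omega
    · rintro ⟨a, b, ha, hb, rfl, rfl, hr⟩
      have ra := mod_rep hm0 (show i + 1 + a < 2 * m by omega)
      have rb := mod_rep hm0 (show i + 1 + b < 2 * m by omega)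
      have hA : (i + 1 + a) % m < m := Nat.mod_lt _ hm0
      have hB : (i + 1 + b) % m < m := Nat.mod_lt _ hm0
      have hAB : (i + 1 + a) % m ≠ (i + 1 + b) % m := by unfold relnat at hr; omega
      have hAi : (i + 1 + a) % m ≠ i := by omega
      have hBi : (i + 1 + b) % m ≠ i := by omega
      refine ⟨fun e => hAB (hinj _ _ hA hB e), fun e => hAi (hinj _ _ hA hi e),
        fun e => hBi (hinj _ _ hB hi e), ?_⟩
      have hcase : (b = a + 1 ∨ a = b + 1) ∨
          ((a = 0 ∧ b = m - 2) ∨ (b = 0 ∧ a = m - 2)) := by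
        unfold relnat at hr; omega
      rcases hcase with hc | hc
      · exact Or.inl ((hadj _ _).2 ⟨_, _, hA, hB, rfl, rfl, by unfold relnat; omega⟩)
      · refine Or.inr ⟨(hadj _ _).2 ⟨i, _, hi, hA, rfl, rfl, by unfold relnat; omega⟩,
          (hadj _ _).2 ⟨i, _, hi, hB, rfl, rfl, by unfold relnat; omega⟩⟩

lemma deficiency_cyc {G : SimpleGraph V} {m : ℕ} {f : ℕ → V} (h : IsCyc G m f) (hm4 : 4 ≤ m)
    {i : ℕ} (hi : i < m) : (deficiencyFinset G (f i)).card = 1 := by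
  obtain ⟨hm, hinj, hadj⟩ := id h
  obtain ⟨P, hP⟩ : ∃ P, (i = 0 ∧ P = m - 1) ∨ (0 < i ∧ P = i - 1) :=
    ⟨if i = 0 then m - 1 else i - 1, by split_ifs with hh <;> [left; right] <;> omega⟩
  obtain ⟨S, hS⟩ : ∃ S, (i = m - 1 ∧ S = 0) ∨ (i < m - 1 ∧ S = i + 1) :=
    ⟨if i = m - 1 then 0 else i + 1, by split_ifs with hh <;> [left; right] <;> omega⟩
  have hPm : P < m := by omega
  have hSm : S < m := by omega
  have hPS : P ≠ S := by omega
  have hadjP : G.Adj (f i) (f P) :=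
    (hadj _ _).2 ⟨i, P, hi, hPm, rfl, rfl, by unfold relnat; omega⟩
  have hadjS : G.Adj (f i) (f S) :=
    (hadj _ _).2 ⟨i, S, hi, hSm, rfl, rfl, by unfold relnat; omega⟩
  have hnadj : ¬ G.Adj (f P) (f S) := by
    intro hc
    obtain ⟨a, b, ha, hb, hfa, hfb, hr⟩ := (hadj _ _).1 hc
    have e1 : a = P := hinj a P ha hPm hfa.symm
    have e2 : b = S := hinj b S hb hSm hfb.symm
    subst e1; subst e2
    unfold relnat at hr; omega
  have key : deficiencyFinset G (f i) = {s(f P, f S)} := by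
    ext e
    simp only [deficiencyFinset, Finset.mem_image, Finset.mem_filter, Finset.mem_product,
      Finset.mem_univ, true_and, and_true, Finset.mem_singleton]
    constructor
    · rintro ⟨⟨p1, p2⟩, ⟨hne, h1, h2, hnad⟩, rfl⟩
      obtain ⟨j, hj, hji, rfl, hrj⟩ := h.nbr hi h1
      obtain ⟨k, hk, hki, rfl, hrk⟩ := h.nbr hi h2
      have hjk : j ≠ k := fun e => hne (by rw [e])
      have hcase : (j = P ∧ k = S) ∨ (j = S ∧ k = P) := by
        unfold relnat at hrj hrk; omega
      rcases hcase with ⟨e1, e2⟩ | ⟨e1, e2⟩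
      · subst e1; subst e2; rfl
      · subst e1; subst e2; exact Sym2.eq_swap
    · rintro rfl
      exact ⟨(f P, f S), ⟨fun e => hPS (hinj _ _ hPm hSm e), hadjP, hadjS, hnadj⟩, rfl⟩
  rw [key, Finset.card_singleton]

lemma IsCyc.simp3 {G : SimpleGraph V} {f : ℕ → V} (h : IsCyc G 3 f) (v : V) :
    IsSimplicial G v := by
  obtain ⟨_, hinj, hadj⟩ := h
  intro a b hva hvb hab
  obtain ⟨p, j, hp, hj, hv1, rfl, hrj⟩ := (hadj v a).1 hva
  obtain ⟨p', k, hp', hk, hv2, rfl, hrk⟩ := (hadj v b).1 hvb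
  have e1 : p' = p := hinj _ _ hp' hp (hv2.symm.trans hv1)
  subst e1
  have hjk : j ≠ k := fun e => hab (by rw [e])
  have hjp : j ≠ p' := by
    intro e
    exact hva.ne (by rw [e]; exact hv1)
  have hkp : k ≠ p' := by
    intro e
    exact hvb.ne (by rw [e]; exact hv2)
  exact (hadj _ _).2 ⟨j, k, hj, hk, rfl, rfl, by unfold relnat at hrj hrk ⊢; omega⟩

lemma deficiency_empty {G : SimpleGraph V} {x : V} (h : IsSimplicial G x) :
    deficiencyFinset G x = ∅ := by
  ext e
  simp only [deficiencyFinset, Finset.mem_image, Finset.mem_filter, Finset.mem_product,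
    Finset.mem_univ, true_and, and_true, Finset.notMem_empty, iff_false]
  rintro ⟨⟨p1, p2⟩, ⟨hne, h1, h2, hnad⟩, rfl⟩
  exact hnad (h p1 p2 h1 h2 hne)

lemma simplicial_elim {G : SimpleGraph V} {x : V} (h : ∀ v, IsSimplicial G v) (v : V) :
    IsSimplicial (elimG G x) v := by
  intro a b ha hb hab
  rw [elimG_adj] at ha hb ⊢
  obtain ⟨hva, hvx, hax, hca⟩ := ha
  obtain ⟨hvb, _, hbx, hcb⟩ := hb
  have ga : G.Adj v a := by
    rcases hca with h1 | ⟨h1, h2⟩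
    · exact h1
    · exact h x v a h1 h2 hva
  have gb : G.Adj v b := by
    rcases hcb with h1 | ⟨h1, h2⟩
    · exact h1
    · exact h x v b h1 h2 hvb
  exact ⟨hab, hax, hbx, Or.inl (h v a b ga gb hab)⟩

lemma fill_simplicial {G : SimpleGraph V} (h : ∀ v, IsSimplicial G v) (L : List V) :
    fillList G L = 0 := by
  induction L generalizing G with
  | nil => rfl
  | cons x xs ih =>
    simp only [fillList]
    rw [deficiency_empty (h x), Finset.card_empty, ih (simplicial_elim h)]

lemma fill_cyc {G : SimpleGraph V} {m : ℕ} {f : ℕ → V} (L : List V) (h : IsCyc G m f)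
    (hnd : L.Nodup) (hmem : ∀ v, v ∈ L ↔ ∃ j, j < m ∧ v = f j) :
    fillList G L = m - 3 := by
  induction L generalizing G m f with
  | nil => exact absurd ((hmem (f 0)).2 ⟨0, lt_of_lt_of_le (by omega) h.1, rfl⟩) (List.not_mem_nil)
  | cons x xs ih =>
    obtain ⟨hm3, hinj, hadj⟩ := id h
    obtain ⟨i, hi, rfl⟩ := (hmem x).1 (List.mem_cons_self)
    rw [List.nodup_cons] at hnd
    obtain ⟨hxnot, hnd'⟩ := hnd
    rcases Nat.lt_or_ge m 4 with hm | hm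
    · have hm' : m = 3 := by omega
      subst hm'
      rw [fill_simplicial (fun v => h.simp3 v)]
    · have hm0 : 0 < m := by omega
      simp only [fillList]
      rw [deficiency_cyc h hm hi, ih (h.elim hm hi) hnd' ?memb]
      · omega
      case memb =>
        intro v
        constructor
        · intro hv
          obtain ⟨j, hj, rfl⟩ := (hmem _).1 (List.mem_cons_of_mem _ hv)
          have hji : j ≠ i := by
            intro e
            subst e
            exact hxnot hv
          obtain ⟨a, ha, hpa⟩ := elim_index hm0 hi hj hji
          exact ⟨a, ha, by rw [hpa]⟩
        · rintro ⟨a, ha, rfl⟩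
          have hA : (i + 1 + a) % m < m := Nat.mod_lt _ hm0
          have ra := mod_rep hm0 (show i + 1 + a < 2 * m by omega)
          have hAi : (i + 1 + a) % m ≠ i := by omega
          have : f ((i + 1 + a) % m) ∈ f i :: xs := (hmem _).2 ⟨_, hA, rfl⟩
          rcases List.mem_cons.1 this with he | hv
          · exact absurd (hinj _ _ hA hi he) hAi
          · exact hv

open Fin.NatCast

lemma cyc_cycleGraph (k : ℕ) :
    IsCyc (SimpleGraph.cycleGraph (k + 3)) (k + 3) (fun a => (a : Fin (k + 3))) := by
  have hm0 : 0 < k + 3 := by omega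
  have hadj : ∀ u v : Fin (k + 3),
      (SimpleGraph.cycleGraph (k + 3)).Adj u v ↔ (u - v).val = 1 ∨ (v - u).val = 1 := by
    intro u v
    rw [SimpleGraph.cycleGraph_adj (n := k + 1)]
    rw [Fin.ext_iff, Fin.ext_iff, Fin.val_one]
  have hsub : ∀ a b : Fin (k + 3), (a - b).val = ((k + 3) - b.val + a.val) % (k + 3) :=
    fun a b => by rw [Fin.sub_def]
  refine ⟨by omega, ?_, ?_⟩
  · intro a b ha hb hab
    have := congrArg Fin.val hab
    rwa [Fin.val_cast_of_lt ha, Fin.val_cast_of_lt hb] at this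
  · intro u v
    constructor
    · intro hA
      refine ⟨u.val, v.val, u.isLt, v.isLt, (Fin.cast_val_eq_self u).symm,
        (Fin.cast_val_eq_self v).symm, ?_⟩
      rw [hadj, hsub, hsub] at hA
      have hu := u.isLt
      have hv := v.isLt
      have r1 := mod_rep hm0 (show (k + 3) - v.val + u.val < 2 * (k + 3) by omega)
      have r2 := mod_rep hm0 (show (k + 3) - u.val + v.val < 2 * (k + 3) by omega)
      unfold relnat
      omega
    · rintro ⟨a, b, ha, hb, rfl, rfl, hr⟩
      rw [hadj, hsub, hsub, Fin.val_cast_of_lt ha, Fin.val_cast_of_lt hb]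
      have r1 := mod_rep hm0 (show (k + 3) - b + a < 2 * (k + 3) by omega)
      have r2 := mod_rep hm0 (show (k + 3) - a + b < 2 * (k + 3) by omega)
      unfold relnat at hr
      omega

/-- every elimination ordering of a cycle on `n ≥ 3` vertices has
fill-in exactly `n - 3`; in particular every ordering is a minimum fill-in ordering. -/
theorem stmt_10 (n : ℕ) (hn : 3 ≤ n) :
    (∀ L : List (Fin n), IsOrdering L →
      fillList (SimpleGraph.cycleGraph n) L = n - 3) ∧
    minFillIn (SimpleGraph.cycleGraph n) = n - 3 := by
  obtain ⟨k, rfl⟩ : ∃ k, n = k + 3 := ⟨n - 3, by omega⟩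
  have hcyc := cyc_cycleGraph k
  have main : ∀ L : List (Fin (k + 3)), IsOrdering L →
      fillList (SimpleGraph.cycleGraph (k + 3)) L = (k + 3) - 3 := by
    rintro L ⟨hnd, hall⟩
    refine fill_cyc L hcyc hnd ?_
    intro v
    constructor
    · intro _
      exact ⟨v.val, v.isLt, (Fin.cast_val_eq_self v).symm⟩
    · intro _
      exact hall v
  refine ⟨main, ?_⟩
  have hex : IsOrdering (Finset.univ.toList : List (Fin (k + 3))) :=
    ⟨Finset.nodup_toList _, fun v => by simp⟩
  have hset : {t | ∃ L : List (Fin (k + 3)), IsOrdering L ∧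
      fillList (SimpleGraph.cycleGraph (k + 3)) L = t} = {(k + 3) - 3} := by
    ext t
    simp only [Set.mem_setOf_eq, Set.mem_singleton_iff]
    constructor
    · rintro ⟨L, hL, rfl⟩
      exact main L hL
    · rintro rfl
      exact ⟨_, hex, main _ hex⟩
  rw [minFillIn, hset, csInf_singleton]
end

section
/- Let G be a graph with a vertex a of degree 2 whose two neighbors x, y are non-adjacent, and suppose {a} is not a separator of G. Then there exists a minimum triangulation T of G containing the edge {x,y} and containing no edge incident to a. -/
open SimpleGraph

attribute [local instance] Classical.propDecidable

variable {V : Type*} [Fintype V] [DecidableEq V]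

set_option linter.unusedSectionVars false
set_option linter.unusedVariables false
set_option linter.unnecessarySeqFocus false
set_option maxHeartbeats 1000000

lemma zmod_val_eq_iff {n : ℕ} [NeZero n] (i j : ZMod n) : i = j ↔ i.val = j.val :=
  ⟨fun h => h ▸ rfl, fun h => ZMod.val_injective n h⟩

lemma zmod_succ_iff {n : ℕ} (hn : 2 ≤ n) (i j : ZMod n) :
    j = i + 1 ↔ j.val = (i.val + 1) % n := by
  haveI : NeZero n := ⟨by omega⟩
  haveI : Fact (1 < n) := ⟨by omega⟩
  rw [zmod_val_eq_iff, ZMod.val_add, ZMod.val_one]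

lemma zmod_one_ne_zero {n : ℕ} (hn : 2 ≤ n) : (1 : ZMod n) ≠ 0 := by
  haveI : NeZero n := ⟨by omega⟩
  haveI : Fact (1 < n) := ⟨by omega⟩
  intro h
  have := (zmod_val_eq_iff (1 : ZMod n) 0).mp h
  rw [ZMod.val_one, ZMod.val_zero] at this
  omega

def contrG (K : SimpleGraph V) (a x : V) : SimpleGraph V where
  Adj u v := u ≠ v ∧ u ≠ a ∧ v ≠ a ∧
    (K.Adj u v ∨ (u = x ∧ K.Adj a v) ∨ (v = x ∧ K.Adj a u))
  symm := by
    constructor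
    rintro u v ⟨h1, h2, h3, h4⟩
    refine ⟨h1.symm, h3, h2, ?_⟩
    tauto
  loopless := by constructor; rintro v ⟨h, -⟩; exact h rfl

def insCycle {n : ℕ} (f : ZMod n → V) (x a : V) : ZMod (n+1) → V :=
  fun k => if k.val = 0 then x else if k.val = 1 then a else f ((k.val - 1 : ℕ) : ZMod n)

lemma insCycle_eval0 {n : ℕ} (f : ZMod n → V) (x a : V) {k : ZMod (n+1)} (h : k.val = 0) :
    insCycle f x a k = x := by simp [insCycle, h]

lemma insCycle_eval1 {n : ℕ} (f : ZMod n → V) (x a : V) {k : ZMod (n+1)} (h : k.val = 1) :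
    insCycle f x a k = a := by simp [insCycle, h]

lemma insCycle_eval2 {n : ℕ} (f : ZMod n → V) (x a : V) {k : ZMod (n+1)} (h : 2 ≤ k.val) :
    insCycle f x a k = f ((k.val - 1 : ℕ) : ZMod n) := by
  have h0 : ¬ (k.val = 0) := by omega
  have h1 : ¬ (k.val = 1) := by omega
  simp [insCycle, h0, h1]

def subCycle {n : ℕ} (f : ZMod n → V) (a : V) : ZMod n → V :=
  fun j => if j = 0 then a else f j

lemma subCycle_eval0 {n : ℕ} (f : ZMod n → V) (a : V) {k : ZMod n} (h : k = 0) :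
    subCycle f a k = a := by simp [subCycle, h]

lemma subCycle_eval1 {n : ℕ} (f : ZMod n → V) (a : V) {k : ZMod n} (h : k ≠ 0) :
    subCycle f a k = f k := by simp [subCycle, h]

section Key

variable {K : SimpleGraph V} {a x : V}

lemma contr_cycle_ne_a {n : ℕ} {f : ZMod n → V}
    (hcyc : ∀ i j, (contrG K a x).Adj (f i) (f j) ↔ (j = i + 1 ∨ i = j + 1)) :
    ∀ i, f i ≠ a := by
  intro i hfi
  have h1 := (hcyc i (i+1)).mpr (Or.inl rfl)
  exact h1.2.1 hfi

lemma key_lemma (hK : IsChordal K) (hax : K.Adj a x) (n : ℕ) (hn : 4 ≤ n)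
    (f : ZMod n → V) (hinj : Function.Injective f)
    (hcyc : ∀ i j, (contrG K a x).Adj (f i) (f j) ↔ (j = i + 1 ∨ i = j + 1))
    (hf0 : f 0 = x) (hq : ¬ K.Adj x (f 1)) : False := by
  haveI : NeZero n := ⟨by omega⟩
  haveI : Fact (1 < n) := ⟨by omega⟩
  have hone : (1 : ZMod n) ≠ 0 := zmod_one_ne_zero (by omega)
  have hfa : ∀ i, f i ≠ a := contr_cycle_ne_a hcyc
  have hxa : x ≠ a := fun h => (hfa 0) (hf0.trans h)
  have hfx : ∀ i : ZMod n, i ≠ 0 → f i ≠ x := by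
    intro i hi hfix
    exact hi (hinj (hfix.trans hf0.symm))
  have hfx0 : ∀ t : ZMod n, f t = x → t = 0 := fun t h => hinj (h.trans hf0.symm)
  have hKaq : K.Adj a (f 1) := by
    have h1 := (hcyc 0 1).mpr (Or.inl (zero_add 1).symm)
    rw [hf0] at h1
    rcases h1.2.2.2 with h | ⟨-, h⟩ | ⟨h, -⟩
    · exact absurd h hq
    · exact h
    · exact absurd h (hfx 1 hone)
  have hnot : ∀ i j : ZMod n, i ≠ j → ¬(j = i + 1 ∨ i = j + 1) →
      ¬K.Adj (f i) (f j) ∧ ¬(f i = x ∧ K.Adj a (f j)) ∧ ¬(f j = x ∧ K.Adj a (f i)) := by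
    intro i j hij hcons
    have h2 : ¬ (contrG K a x).Adj (f i) (f j) := fun h => hcons ((hcyc i j).mp h)
    have hne : f i ≠ f j := fun e => hij (hinj e)
    refine ⟨fun h => h2 ⟨hne, hfa i, hfa j, Or.inl h⟩,
      fun h => h2 ⟨hne, hfa i, hfa j, Or.inr (Or.inl h)⟩,
      fun h => h2 ⟨hne, hfa i, hfa j, Or.inr (Or.inr h)⟩⟩
  have fvalv : ∀ m : ℕ, m < n → ((m : ZMod n)).val = m := fun m hm => by
    rw [ZMod.val_natCast, Nat.mod_eq_of_lt hm]
  have hc : ((n - 1 : ℕ) : ZMod n) = -1 := by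
    rw [Nat.cast_sub (by omega : 1 ≤ n), ZMod.natCast_self, Nat.cast_one, zero_sub]
  by_cases hap : K.Adj a (f (-1))
  · -- substitute a for x at position 0
    have hsinj : Function.Injective (subCycle f a) := by
      intro i j h
      by_cases hi : i = 0 <;> by_cases hj : j = 0
      · rw [hi, hj]
      · rw [subCycle_eval0 f a hi, subCycle_eval1 f a hj] at h
        exact absurd h.symm (hfa j)
      · rw [subCycle_eval1 f a hi, subCycle_eval0 f a hj] at h
        exact absurd h (hfa i)
      · rw [subCycle_eval1 f a hi, subCycle_eval1 f a hj] at h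
        exact hinj h
    have case01 : ∀ j : ZMod n, j ≠ 0 → (K.Adj a (f j) ↔ (j = 0 + 1 ∨ (0 : ZMod n) = j + 1)) := by
      intro j hj
      constructor
      · intro h
        by_contra hcons
        exact (hnot 0 j (fun e => hj e.symm) hcons).2.1 ⟨hf0, h⟩
      · rintro (h | h)
        · rw [zero_add] at h; rw [h]; exact hKaq
        · have hj1 : j = -1 := eq_neg_of_add_eq_zero_left h.symm
          rw [hj1]; exact hap
    refine hK n hn (subCycle f a) hsinj ?_
    intro i j
    by_cases hi : i = 0 <;> by_cases hj : j = 0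
    · rw [hi, hj, subCycle_eval0 f a rfl]
      refine iff_of_false (K.loopless.irrefl a) ?_
      rw [zero_add]
      rintro (h | h) <;> exact hone h.symm
    · rw [subCycle_eval0 f a hi, subCycle_eval1 f a hj, hi]
      exact case01 j hj
    · rw [subCycle_eval1 f a hi, subCycle_eval0 f a hj, hj]
      rw [SimpleGraph.adj_comm, or_comm]
      exact case01 i hi
    · rw [subCycle_eval1 f a hi, subCycle_eval1 f a hj]
      constructor
      · intro h
        rcases eq_or_ne i j with rfl | hij
        · exact absurd h (K.loopless.irrefl _)
        · by_contra hcons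
          exact (hnot i j hij hcons).1 h
      · intro h
        rcases ((hcyc i j).mpr h).2.2.2 with h' | ⟨hfix, -⟩ | ⟨hfjx, -⟩
        · exact h'
        · exact absurd hfix (hfx i hi)
        · exact absurd hfjx (hfx j hj)
  · -- insert a between positions 0 (x) and 1
    have hxp : K.Adj x (f (-1)) := by
      have h1 := (hcyc (-1) 0).mpr (Or.inl (neg_add_cancel 1).symm)
      rw [hf0] at h1
      rcases h1.2.2.2 with h | ⟨h, -⟩ | ⟨-, h⟩
      · exact h.symm
      · exact absurd h (hfx (-1) (fun e => hone (neg_eq_zero.mp e)))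
      · exact absurd h hap
    have hvlt : ∀ k : ZMod (n+1), k.val < n + 1 := fun k => ZMod.val_lt k
    have hginj : Function.Injective (insCycle f x a) := by
      intro k l h
      have hkv := hvlt k; have hlv := hvlt l
      haveI : NeZero (n+1) := ⟨by omega⟩
      rw [zmod_val_eq_iff]
      by_cases hk0 : k.val = 0 <;> by_cases hl0 : l.val = 0
      · omega
      · rw [insCycle_eval0 f x a hk0] at h
        by_cases hl1 : l.val = 1
        · rw [insCycle_eval1 f x a hl1] at h; exact absurd h hxa
        · rw [insCycle_eval2 f x a (by omega)] at h
          have := hfx0 _ h.symm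
          rw [zmod_val_eq_iff, fvalv _ (by omega), ZMod.val_zero] at this
          omega
      · rw [insCycle_eval0 f x a hl0] at h
        by_cases hk1 : k.val = 1
        · rw [insCycle_eval1 f x a hk1] at h; exact absurd h.symm hxa
        · rw [insCycle_eval2 f x a (by omega)] at h
          have := hfx0 _ h
          rw [zmod_val_eq_iff, fvalv _ (by omega), ZMod.val_zero] at this
          omega
      · by_cases hk1 : k.val = 1 <;> by_cases hl1 : l.val = 1
        · omega
        · rw [insCycle_eval1 f x a hk1, insCycle_eval2 f x a (by omega)] at h
          exact absurd h.symm (hfa _)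
        · rw [insCycle_eval2 f x a (by omega), insCycle_eval1 f x a hl1] at h
          exact absurd h (hfa _)
        · rw [insCycle_eval2 f x a (by omega), insCycle_eval2 f x a (by omega)] at h
          have := hinj h
          rw [zmod_val_eq_iff, fvalv _ (by omega), fvalv _ (by omega)] at this
          omega
    refine hK (n+1) (by omega) (insCycle f x a) hginj ?_
    have hPsym : ∀ i j : ZMod (n+1), i.val ≤ j.val →
        (K.Adj (insCycle f x a i) (insCycle f x a j) ↔ (j = i + 1 ∨ i = j + 1)) := by
      intro i j hij
      have hiv := hvlt i; have hjv := hvlt j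
      rw [zmod_succ_iff (by omega : 2 ≤ n + 1) i j, zmod_succ_iff (by omega : 2 ≤ n + 1) j i]
      have e1 : (i.val + 1) % (n+1) = if i.val = n then 0 else i.val + 1 := by
        split_ifs with h
        · rw [h]; exact Nat.mod_self _
        · exact Nat.mod_eq_of_lt (by omega)
      have e2 : (j.val + 1) % (n+1) = if j.val = n then 0 else j.val + 1 := by
        split_ifs with h
        · rw [h]; exact Nat.mod_self _
        · exact Nat.mod_eq_of_lt (by omega)
      rw [e1, e2]
      by_cases hi0 : i.val = 0
      · rw [insCycle_eval0 f x a hi0]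
        by_cases hj0 : j.val = 0
        · rw [insCycle_eval0 f x a hj0]
          refine iff_of_false (K.loopless.irrefl x) ?_
          rintro (h | h) <;> (split_ifs at h <;> omega)
        · by_cases hj1 : j.val = 1
          · rw [insCycle_eval1 f x a hj1]
            refine iff_of_true hax.symm (Or.inl ?_)
            split_ifs with h <;> omega
          · rw [insCycle_eval2 f x a (by omega)]
            by_cases hjn : j.val = n
            · rw [hjn, hc]
              refine iff_of_true hxp (Or.inr ?_)
              split_ifs with h <;> omega
            · refine iff_of_false ?_ ?_
              · by_cases hj2 : j.val = 2
                · rw [hj2]; norm_num; exact hq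
                · rw [← hf0]
                  refine (hnot 0 ((j.val - 1 : ℕ) : ZMod n) ?_ ?_).1
                  · intro e
                    rw [zmod_val_eq_iff, ZMod.val_zero, fvalv _ (by omega)] at e
                    omega
                  · rintro (h | h)
                    · rw [zero_add, zmod_val_eq_iff, fvalv _ (by omega), ZMod.val_one] at h
                      omega
                    · have := eq_neg_of_add_eq_zero_left h.symm
                      rw [← hc, zmod_val_eq_iff, fvalv _ (by omega), fvalv _ (by omega)] at this
                      omega
              · rintro (h | h) <;> (split_ifs at h <;> omega)
      · by_cases hi1 : i.val = 1
        · rw [insCycle_eval1 f x a hi1]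
          by_cases hj1 : j.val = 1
          · rw [insCycle_eval1 f x a hj1]
            refine iff_of_false (K.loopless.irrefl a) ?_
            rintro (h | h) <;> (split_ifs at h <;> omega)
          · rw [insCycle_eval2 f x a (by omega)]
            by_cases hj2 : j.val = 2
            · rw [hj2]; norm_num
              refine iff_of_true hKaq (Or.inl ?_)
              split_ifs with h <;> omega
            · refine iff_of_false ?_ ?_
              · by_cases hjn : j.val = n
                · rw [hjn, hc]; exact hap
                · intro h
                  refine (hnot 0 ((j.val - 1 : ℕ) : ZMod n) ?_ ?_).2.1 ⟨hf0, h⟩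
                  · intro e
                    rw [zmod_val_eq_iff, ZMod.val_zero, fvalv _ (by omega)] at e
                    omega
                  · rintro (h' | h')
                    · rw [zero_add, zmod_val_eq_iff, fvalv _ (by omega), ZMod.val_one] at h'
                      omega
                    · have := eq_neg_of_add_eq_zero_left h'.symm
                      rw [← hc, zmod_val_eq_iff, fvalv _ (by omega), fvalv _ (by omega)] at this
                      omega
              · rintro (h | h) <;> (split_ifs at h <;> omega)
        · -- 2 ≤ i.val ≤ j.val
          rw [insCycle_eval2 f x a (by omega), insCycle_eval2 f x a (by omega)]
          constructor
          · intro h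
            rcases eq_or_ne i.val j.val with he | hne
            · rw [he] at h
              exact absurd h (K.loopless.irrefl _)
            · have hcontr : (contrG K a x).Adj (f ((i.val - 1 : ℕ) : ZMod n))
                  (f ((j.val - 1 : ℕ) : ZMod n)) := ⟨h.ne, hfa _, hfa _, Or.inl h⟩
              rcases (hcyc _ _).mp hcontr with hc1 | hc1
              · rw [zmod_succ_iff (by omega : 2 ≤ n), fvalv _ (by omega), fvalv _ (by omega)] at hc1
                have e3 : (i.val - 1 + 1) % n = if i.val - 1 + 1 = n then 0 else i.val - 1 + 1 := by
                  split_ifs with h'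
                  · rw [h']; exact Nat.mod_self _
                  · exact Nat.mod_eq_of_lt (by omega)
                rw [e3] at hc1
                split_ifs at hc1 <;> split_ifs <;> omega
              · rw [zmod_succ_iff (by omega : 2 ≤ n), fvalv _ (by omega), fvalv _ (by omega)] at hc1
                have e3 : (j.val - 1 + 1) % n = if j.val - 1 + 1 = n then 0 else j.val - 1 + 1 := by
                  split_ifs with h'
                  · rw [h']; exact Nat.mod_self _
                  · exact Nat.mod_eq_of_lt (by omega)
                rw [e3] at hc1
                split_ifs at hc1 <;> split_ifs <;> omega
          · intro h
            have hj : j.val = i.val + 1 ∧ i.val < n := by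
              rcases h with h | h <;> split_ifs at h <;> omega
            have hcons : ((j.val - 1 : ℕ) : ZMod n) = ((i.val - 1 : ℕ) : ZMod n) + 1 := by
              rw [zmod_succ_iff (by omega : 2 ≤ n), fvalv _ (by omega), fvalv _ (by omega),
                Nat.mod_eq_of_lt (by omega)]
              omega
            rcases ((hcyc _ _).mpr (Or.inl hcons)).2.2.2 with h' | ⟨hfix, -⟩ | ⟨hfjx, -⟩
            · exact h'
            · have := hfx0 _ hfix
              rw [zmod_val_eq_iff, fvalv _ (by omega), ZMod.val_zero] at this
              omega
            · have := hfx0 _ hfjx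
              rw [zmod_val_eq_iff, fvalv _ (by omega), ZMod.val_zero] at this
              omega
    intro i j
    rcases le_total i.val j.val with h | h
    · exact hPsym i j h
    · rw [SimpleGraph.adj_comm, or_comm]
      exact hPsym j i h

end Key

lemma contrG_chordal (K : SimpleGraph V) (hK : IsChordal K) (a x : V) (hax : K.Adj a x) :
    IsChordal (contrG K a x) := by
  intro n hn f hinj hcyc
  haveI : NeZero n := ⟨by omega⟩
  have hfa := contr_cycle_ne_a hcyc
  by_cases hx : ∀ i, f i ≠ x
  · refine hK n hn f hinj fun i j => Iff.trans ?_ (hcyc i j)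
    constructor
    · intro h; exact ⟨h.ne, hfa i, hfa j, Or.inl h⟩
    · rintro ⟨-, -, -, h | ⟨h, -⟩ | ⟨h, -⟩⟩
      · exact h
      · exact absurd h (hx i)
      · exact absurd h (hx j)
  · push_neg at hx
    obtain ⟨i₀, hi₀⟩ := hx
    have hinj₁ : Function.Injective (fun j : ZMod n => f (j + i₀)) := by
      intro i j h
      exact add_right_cancel (hinj h)
    have htr : ∀ u v : ZMod n, u + i₀ = v + i₀ + 1 ↔ u = v + 1 := fun u v => by
      rw [add_right_comm, add_left_inj]
    have hcyc₁ : ∀ i j, (contrG K a x).Adj ((fun j : ZMod n => f (j + i₀)) i)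
        ((fun j : ZMod n => f (j + i₀)) j) ↔ (j = i + 1 ∨ i = j + 1) := by
      intro i j
      simp only []
      rw [hcyc (i + i₀) (j + i₀), htr, htr]
    have hf₁0 : (fun j : ZMod n => f (j + i₀)) 0 = x := by
      simp only [zero_add]; exact hi₀
    have hfa₁ : ∀ i, (fun j : ZMod n => f (j + i₀)) i ≠ a := contr_cycle_ne_a hcyc₁
    by_cases hq1 : K.Adj x ((fun j : ZMod n => f (j + i₀)) 1)
    · by_cases hp1 : K.Adj x ((fun j : ZMod n => f (j + i₀)) (-1))
      · -- both chords to x exist: the cycle lives in K itself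
        refine hK n hn _ hinj₁ fun i j => ?_
        constructor
        · intro h
          exact (hcyc₁ i j).mp ⟨h.ne, hfa₁ i, hfa₁ j, Or.inl h⟩
        · intro h
          rcases ((hcyc₁ i j).mpr h).2.2.2 with h' | ⟨hfix, -⟩ | ⟨hfjx, -⟩
          · exact h'
          · have hi : i = 0 := hinj₁ (hfix.trans hf₁0.symm)
            have hfix' : f (i + i₀) = x := hfix
            rcases h with h | h
            · rw [hi, zero_add] at h
              rw [hfix', h]; exact hq1
            · rw [hi] at h
              have hj1 : j = -1 := eq_neg_of_add_eq_zero_left h.symm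
              rw [hfix', hj1]; exact hp1
          · have hj : j = 0 := hinj₁ (hfjx.trans hf₁0.symm)
            have hfjx' : f (j + i₀) = x := hfjx
            rcases h with h | h
            · rw [hj] at h
              have hi1 : i = -1 := eq_neg_of_add_eq_zero_left h.symm
              rw [hfjx', hi1]; exact hp1.symm
            · rw [hj, zero_add] at h
              rw [hfjx', h]; exact hq1.symm
      · -- reverse the cycle and apply key_lemma
        have hrev : ∀ u v : ZMod n, -v = -u + 1 ↔ u = v + 1 := by
          intro u v
          constructor <;> intro h <;> linear_combination h
        refine key_lemma hK hax n hn (fun j : ZMod n => f (-j + i₀))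
          (fun i j h => neg_injective (add_right_cancel (hinj h))) ?_ ?_ ?_
        · intro i j
          rw [hcyc (-i + i₀) (-j + i₀), htr, htr, hrev, hrev, or_comm]
        · simp only [neg_zero, zero_add]; exact hi₀
        · simpa only [] using hp1
    · exact key_lemma hK hax n hn _ hinj₁ hcyc₁ hf₁0 hq1

lemma zmod_cast_ne {n : ℕ} (hn : 2 ≤ n) {m : ℕ} (hm : m < n) (h0 : m ≠ 0) :
    ((m : ZMod n)) ≠ 0 := by
  haveI : NeZero n := ⟨by omega⟩
  intro h
  rw [zmod_val_eq_iff, ZMod.val_natCast, Nat.mod_eq_of_lt hm, ZMod.val_zero] at h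
  omega

def splice (g : ℕ → V) (i d : ℕ) : ℕ → V := fun k => if k ≤ i then g k else g (k + d)

lemma splice_le (g : ℕ → V) (i d : ℕ) {k : ℕ} (h : k ≤ i) : splice g i d k = g k := by
  simp [splice, h]

lemma splice_gt (g : ℕ → V) (i d : ℕ) {k : ℕ} (h : ¬ k ≤ i) : splice g i d k = g (k + d) := by
  simp [splice, h]

lemma exists_chordless_path (K : SimpleGraph V) {x y : V} (h : K.Reachable x y) :
    ∃ (ℓ : ℕ) (g : ℕ → V), g 0 = x ∧ g ℓ = y ∧ (∀ i, i < ℓ → K.Adj (g i) (g (i+1))) ∧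
      (∀ i j, i ≤ ℓ → j ≤ ℓ → g i = g j → i = j) ∧
      (∀ i j, i + 2 ≤ j → j ≤ ℓ → ¬K.Adj (g i) (g j)) := by
  classical
  have hP : ∃ ℓ : ℕ, ∃ g : ℕ → V, g 0 = x ∧ g ℓ = y ∧ ∀ i, i < ℓ → K.Adj (g i) (g (i+1)) := by
    obtain ⟨w⟩ := h
    exact ⟨w.length, w.getVert, w.getVert_zero, w.getVert_length,
      fun i hi => w.adj_getVert_succ hi⟩
  set ℓ := Nat.find hP with hℓ
  obtain ⟨g, hg0, hgl, hadj⟩ : ∃ g : ℕ → V, g 0 = x ∧ g ℓ = y ∧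
      ∀ i, i < ℓ → K.Adj (g i) (g (i+1)) := Nat.find_spec hP
  have hmin : ∀ m, m < ℓ →
      ¬∃ g : ℕ → V, g 0 = x ∧ g m = y ∧ ∀ i, i < m → K.Adj (g i) (g (i+1)) := by
    intro m hm
    rw [hℓ] at hm
    exact Nat.find_min hP hm
  clear_value ℓ
  have hinj : ∀ i j, i < j → j ≤ ℓ → g i ≠ g j := by
    intro i j hij hj he
    apply hmin (ℓ - (j - i)) (by omega)
    refine ⟨splice g i (j - i), ?_, ?_, ?_⟩
    · rw [splice_le g i _ (Nat.zero_le i)]; exact hg0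
    · by_cases hk : ℓ - (j - i) ≤ i
      · have e1 : ℓ - (j - i) = i := by omega
        have e2 : j = ℓ := by omega
        rw [splice_le g i _ hk, e1, he, e2, hgl]
      · rw [splice_gt g i _ hk, show ℓ - (j - i) + (j - i) = ℓ by omega, hgl]
    · intro k hk
      by_cases h1 : k + 1 ≤ i
      · rw [splice_le g i _ (by omega), splice_le g i _ h1]
        exact hadj k (by omega)
      · by_cases h2 : k ≤ i
        · have hki : k = i := by omega
          rw [splice_le g i _ h2, splice_gt g i _ (by omega), hki, he,
            show i + 1 + (j - i) = j + 1 by omega]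
          exact hadj j (by omega)
        · rw [splice_gt g i _ h2, splice_gt g i _ (by omega),
            show k + 1 + (j - i) = k + (j - i) + 1 by omega]
          exact hadj _ (by omega)
  refine ⟨ℓ, g, hg0, hgl, hadj, ?_, ?_⟩
  · intro i j hi hj he
    rcases lt_trichotomy i j with h' | h' | h'
    · exact absurd he (hinj i j h' hj)
    · exact h'
    · exact absurd he.symm (hinj j i h' hi)
  · intro i j hij hj hKadj
    apply hmin (ℓ - (j - i - 1)) (by omega)
    refine ⟨splice g i (j - i - 1), ?_, ?_, ?_⟩
    · rw [splice_le g i _ (Nat.zero_le i)]; exact hg0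
    · rw [splice_gt g i _ (by omega), show ℓ - (j - i - 1) + (j - i - 1) = ℓ by omega, hgl]
    · intro k hk
      by_cases h1 : k + 1 ≤ i
      · rw [splice_le g i _ (by omega), splice_le g i _ h1]
        exact hadj k (by omega)
      · by_cases h2 : k ≤ i
        · have hki : k = i := by omega
          rw [splice_le g i _ h2, splice_gt g i _ (by omega), hki,
            show i + 1 + (j - i - 1) = j by omega]
          exact hKadj
        · rw [splice_gt g i _ h2, splice_gt g i _ (by omega),
            show k + 1 + (j - i - 1) = k + (j - i - 1) + 1 by omega]
          exact hadj _ (by omega)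

def cpCycle (g : ℕ → V) (a : V) (m : ℕ) : ZMod (m+2) → V :=
  fun k => if k.val = m + 1 then a else g k.val

lemma cpCycle_evalA (g : ℕ → V) (a : V) (m : ℕ) {k : ZMod (m+2)} (h : k.val = m+1) :
    cpCycle g a m k = a := by simp [cpCycle, h]

lemma cpCycle_evalG (g : ℕ → V) (a : V) (m : ℕ) {k : ZMod (m+2)} (h : k.val ≤ m) :
    cpCycle g a m k = g k.val := by
  have : ¬ (k.val = m + 1) := by omega
  simp [cpCycle, this]

lemma path_cycle (K : SimpleGraph V) (hK : IsChordal K) (a : V) (m : ℕ) (hm : 2 ≤ m)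
    (g : ℕ → V)
    (hinj : ∀ i j, i ≤ m → j ≤ m → g i = g j → i = j)
    (hadj : ∀ i, i < m → K.Adj (g i) (g (i+1)))
    (hchord : ∀ i j, i + 2 ≤ j → j ≤ m → ¬K.Adj (g i) (g j))
    (ha : ∀ i, i ≤ m → g i ≠ a)
    (hax : K.Adj a (g 0)) (hay : K.Adj a (g m))
    (hint : ∀ i, 0 < i → i < m → ¬K.Adj a (g i)) : False := by
  haveI : NeZero (m+2) := ⟨by omega⟩
  have hvlt : ∀ k : ZMod (m+2), k.val < m + 2 := fun k => ZMod.val_lt k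
  have hginj : Function.Injective (cpCycle g a m) := by
    intro k l h
    have hkv := hvlt k; have hlv := hvlt l
    rw [zmod_val_eq_iff]
    by_cases hk : k.val = m + 1 <;> by_cases hl : l.val = m + 1
    · omega
    · rw [cpCycle_evalA g a m hk, cpCycle_evalG g a m (by omega)] at h
      exact absurd h.symm (ha l.val (by omega))
    · rw [cpCycle_evalG g a m (by omega), cpCycle_evalA g a m hl] at h
      exact absurd h (ha k.val (by omega))
    · rw [cpCycle_evalG g a m (by omega), cpCycle_evalG g a m (by omega)] at h
      exact hinj _ _ (by omega) (by omega) h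
  refine hK (m+2) (by omega) (cpCycle g a m) hginj ?_
  have hPsym : ∀ i j : ZMod (m+2), i.val ≤ j.val →
      (K.Adj (cpCycle g a m i) (cpCycle g a m j) ↔ (j = i + 1 ∨ i = j + 1)) := by
    intro i j hij
    have hiv := hvlt i; have hjv := hvlt j
    rw [zmod_succ_iff (by omega : 2 ≤ m + 2) i j, zmod_succ_iff (by omega : 2 ≤ m + 2) j i]
    have e1 : (i.val + 1) % (m+2) = if i.val = m + 1 then 0 else i.val + 1 := by
      split_ifs with h
      · rw [h]; exact Nat.mod_self _
      · exact Nat.mod_eq_of_lt (by omega)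
    have e2 : (j.val + 1) % (m+2) = if j.val = m + 1 then 0 else j.val + 1 := by
      split_ifs with h
      · rw [h]; exact Nat.mod_self _
      · exact Nat.mod_eq_of_lt (by omega)
    rw [e1, e2]
    by_cases hja : j.val = m + 1
    · by_cases hia : i.val = m + 1
      · rw [cpCycle_evalA g a m hia, cpCycle_evalA g a m hja]
        refine iff_of_false (K.loopless.irrefl a) ?_
        split_ifs <;> omega
      · rw [cpCycle_evalG g a m (by omega), cpCycle_evalA g a m hja]
        by_cases hiv0 : i.val = 0
        · refine iff_of_true ?_ ?_
          · rw [hiv0]; exact hax.symm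
          · split_ifs <;> omega
        · by_cases hivm : i.val = m
          · refine iff_of_true ?_ ?_
            · rw [hivm]; exact hay.symm
            · split_ifs <;> omega
          · refine iff_of_false ?_ ?_
            · intro h
              exact hint i.val (by omega) (by omega) h.symm
            · split_ifs <;> omega
    · have hia : ¬ (i.val = m + 1) := by omega
      rw [cpCycle_evalG g a m (by omega), cpCycle_evalG g a m (by omega)]
      by_cases hsucc : j.val = i.val + 1
      · refine iff_of_true ?_ ?_
        · rw [hsucc]; exact hadj i.val (by omega)
        · split_ifs <;> omega
      · refine iff_of_false ?_ ?_
        · intro h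
          rcases eq_or_ne i.val j.val with he | hne
          · rw [he] at h; exact K.loopless.irrefl _ h
          · exact hchord i.val j.val (by omega) (by omega) h
        · split_ifs <;> omega
  intro i j
  rcases le_total i.val j.val with h | h
  · exact hPsym i j h
  · rw [SimpleGraph.adj_comm, or_comm]
    exact hPsym j i h

lemma zmod_two_ne_zero {n : ℕ} (hn : 4 ≤ n) : (2 : ZMod n) ≠ 0 := by
  intro h
  have h2 : ((2 : ℕ) : ZMod n) = 0 := by push_cast; exact h
  haveI : NeZero n := ⟨by omega⟩
  rw [ZMod.natCast_eq_zero_iff] at h2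
  have := Nat.le_of_dvd (by norm_num) h2
  omega

lemma zmod_three_ne_zero {n : ℕ} (hn : 4 ≤ n) : (3 : ZMod n) ≠ 0 := by
  intro h
  have h2 : ((3 : ℕ) : ZMod n) = 0 := by push_cast; exact h
  haveI : NeZero n := ⟨by omega⟩
  rw [ZMod.natCast_eq_zero_iff] at h2
  have := Nat.le_of_dvd (by norm_num) h2
  omega

lemma apex_chordal (N : SimpleGraph V) (hN : IsChordal N) (a x y : V)
    (ha : ∀ v, ¬N.Adj a v) (hxy : N.Adj x y) :
    IsChordal (N ⊔ SimpleGraph.fromEdgeSet {s(a,x), s(a,y)}) := by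
  intro n hn f hinj hcyc
  haveI : NeZero n := ⟨by omega⟩
  have hax : a ≠ x := fun e => ha y (e ▸ hxy)
  have hay : a ≠ y := fun e => ha x (e ▸ hxy.symm)
  have hadj_char : ∀ u v : V, (N ⊔ SimpleGraph.fromEdgeSet {s(a,x), s(a,y)}).Adj u v ↔
      N.Adj u v ∨ ((s(u,v) = s(a,x) ∨ s(u,v) = s(a,y)) ∧ u ≠ v) := by
    intro u v
    simp only [SimpleGraph.sup_adj, SimpleGraph.fromEdgeSet_adj, Set.mem_insert_iff,
      Set.mem_singleton_iff]
  have hAa : ∀ w, (N ⊔ SimpleGraph.fromEdgeSet {s(a,x), s(a,y)}).Adj a w → (w = x ∨ w = y) := by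
    intro w hw
    rw [hadj_char] at hw
    rcases hw with h | ⟨h, hne⟩
    · exact absurd h (ha w)
    · rcases h with h | h
      · rcases Sym2.eq_iff.mp h with ⟨-, h2⟩ | ⟨h1, h2⟩
        · exact Or.inl h2
        · exact absurd h2.symm hne
      · rcases Sym2.eq_iff.mp h with ⟨-, h2⟩ | ⟨h1, h2⟩
        · exact Or.inr h2
        · exact absurd h2.symm hne
  by_cases hexa : ∃ i, f i = a
  · obtain ⟨i, hfi⟩ := hexa
    have h1 : (N ⊔ SimpleGraph.fromEdgeSet {s(a,x), s(a,y)}).Adj (f i) (f (i+1)) :=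
      (hcyc i (i+1)).mpr (Or.inl rfl)
    have h2 : (N ⊔ SimpleGraph.fromEdgeSet {s(a,x), s(a,y)}).Adj (f i) (f (i-1)) :=
      ((hcyc (i-1) i).mpr (Or.inl (sub_add_cancel i 1).symm)).symm
    rw [hfi] at h1 h2
    have hq := hAa _ h1
    have hp := hAa _ h2
    have hne : f (i-1) ≠ f (i+1) := by
      intro e
      have he := hinj e
      have h2z : (2 : ZMod n) = 0 := by linear_combination -he
      exact zmod_two_ne_zero hn h2z
    have hxyadj : (N ⊔ SimpleGraph.fromEdgeSet {s(a,x), s(a,y)}).Adj (f (i-1)) (f (i+1)) := by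
      rcases hp with h3 | h3 <;> rcases hq with h4 | h4
      · exact absurd (h3.trans h4.symm) hne
      · rw [h3, h4]; exact (hadj_char _ _).mpr (Or.inl hxy)
      · rw [h3, h4]; exact (hadj_char _ _).mpr (Or.inl hxy.symm)
      · exact absurd (h3.trans h4.symm) hne
    rcases (hcyc (i-1) (i+1)).mp hxyadj with e | e
    · rw [sub_add_cancel] at e
      exact zmod_one_ne_zero (n := n) (by omega) (by linear_combination e)
    · exact zmod_three_ne_zero hn (by linear_combination -e)
  · push_neg at hexa
    refine hN n hn f hinj fun i j => Iff.trans ?_ (hcyc i j)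
    constructor
    · intro h
      exact (hadj_char _ _).mpr (Or.inl h)
    · intro h
      rcases (hadj_char _ _).mp h with h' | ⟨h', hne⟩
      · exact h'
      · exfalso
        rcases h' with h' | h' <;>
          (rcases Sym2.eq_iff.mp h' with ⟨h1, -⟩ | ⟨-, h2⟩; exacts [hexa i h1, hexa j h2])

lemma find_common_neighbor (K : SimpleGraph V) (hK : IsChordal K) {a x y : V}
    (hax : K.Adj a x) (hay : K.Adj a y) (hxy : ¬K.Adj x y) (hxny : x ≠ y)
    (hreach : (deleteSet K {a}).Reachable x y) :
    ∃ z, K.Adj a z ∧ K.Adj x z := by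
  obtain ⟨ℓ, g, hg0, hgl, hadj, hinj, hchord⟩ := exists_chordless_path _ hreach
  have hga : ∀ i, i ≤ ℓ → g i ≠ a := by
    intro i hi e
    rcases Nat.lt_or_ge i ℓ with hlt | hge
    · exact (hadj i hlt).2.1 (by rw [e]; exact Set.mem_singleton a)
    · have hie : i = ℓ := by omega
      rw [hie, hgl] at e
      exact hay.ne' e
  have hKadj : ∀ i, i < ℓ → K.Adj (g i) (g (i+1)) := fun i h => (hadj i h).1
  have hKchord : ∀ i j, i + 2 ≤ j → j ≤ ℓ → ¬K.Adj (g i) (g j) := by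
    intro i j h1 h2 hA
    exact hchord i j h1 h2 ⟨hA, fun e => hga i (by omega) e, fun e => hga j h2 e⟩
  have hl2 : 2 ≤ ℓ := by
    rcases Nat.lt_or_ge ℓ 2 with h | h
    · exfalso
      have hl01 : ℓ = 0 ∨ ℓ = 1 := by omega
      rcases hl01 with h0 | h1
      · rw [h0] at hgl
        exact hxny (hg0.symm.trans hgl)
      · apply hxy
        have := hKadj 0 (by omega)
        rwa [hg0, show (0 : ℕ) + 1 = 1 from rfl, ← h1, hgl] at this
    · exact h
  by_cases hex : ∃ i, 0 < i ∧ i < ℓ ∧ K.Adj a (g i)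
  · set m := Nat.find hex with hm
    obtain ⟨hm0, hmℓ, hmadj⟩ : 0 < m ∧ m < ℓ ∧ K.Adj a (g m) := Nat.find_spec hex
    have hmmin : ∀ i, 0 < i → i < m → ¬K.Adj a (g i) := by
      intro i h1 h2 hA
      rw [hm] at h2
      exact Nat.find_min hex h2 ⟨h1, by omega, hA⟩
    by_cases hm1 : m = 1
    · refine ⟨g 1, ?_, ?_⟩
      · rw [← hm1]; exact hmadj
      · have := hKadj 0 (by omega)
        rwa [hg0] at this
    · exfalso
      exact path_cycle K hK a m (by omega) g
        (fun i j hi hj => hinj i j (by omega) (by omega))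
        (fun i h => hKadj i (by omega))
        (fun i j h1 h2 => hKchord i j h1 (by omega))
        (fun i h => hga i (by omega))
        (by rw [hg0]; exact hax) hmadj hmmin
  · push_neg at hex
    exfalso
    exact path_cycle K hK a ℓ hl2 g hinj hKadj hKchord hga
      (by rw [hg0]; exact hax) (by rw [hgl]; exact hay) hex


/-- if `a` has degree 2 with non-adjacent neighbors `x, y` and `a`
is not a cut vertex, then there is a minimum triangulation containing `{x,y}` and
no edge incident to `a`. -/
theorem stmt_12 (G : SimpleGraph V) (a x y : V)
    (hxy : x ≠ y) (hax : G.Adj a x) (hay : G.Adj a y) (hnadj : ¬ G.Adj x y)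
    (hdeg : G.neighborSet a = {x, y})
    (hcut : ¬ ∃ u v : V, u ≠ a ∧ v ≠ a ∧ G.Reachable u v ∧
      ¬ (deleteSet G {a}).Reachable u v) :
    ∃ T : Finset (Sym2 V), IsMinTriangulation G T ∧ s(x, y) ∈ T ∧
      ∀ z : V, s(a, z) ∉ T := by
  classical
  push_neg at hcut
  -- neighborhood characterization
  have hnbr : ∀ v, G.Adj a v ↔ (v = x ∨ v = y) := by
    intro v
    have h := Set.ext_iff.mp hdeg v
    simpa [SimpleGraph.mem_neighborSet, Set.mem_insert_iff, Set.mem_singleton_iff] using h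
  -- existence of a triangulation (fill everything)
  have hT0 : IsTriangulation G (Finset.univ.filter
      (fun e : Sym2 V => ¬ e.IsDiag ∧ e ∉ G.edgeSet)) := by
    constructor
    · intro e he
      exact (Finset.mem_filter.mp he).2
    · have hfull : ∀ u v : V, (G ⊔ SimpleGraph.fromEdgeSet
          (↑(Finset.univ.filter (fun e : Sym2 V => ¬ e.IsDiag ∧ e ∉ G.edgeSet)) :
            Set (Sym2 V))).Adj u v ↔ u ≠ v := by
        intro u v
        constructor
        · exact fun h => h.ne
        · intro h
          by_cases hG : G.Adj u v
          · exact SimpleGraph.sup_adj _ _ _ _ |>.mpr (Or.inl hG)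
          · refine SimpleGraph.sup_adj _ _ _ _ |>.mpr (Or.inr ?_)
            rw [SimpleGraph.fromEdgeSet_adj]
            refine ⟨Finset.mem_coe.mpr (Finset.mem_filter.mpr ⟨Finset.mem_univ _, ?_, ?_⟩), h⟩
            · rw [Sym2.isDiag_iff_proj_eq]
              exact h
            · rw [SimpleGraph.mem_edgeSet]
              exact hG
      intro n hn f hinj hcyc
      haveI : NeZero n := ⟨by omega⟩
      have h02 : f 0 ≠ f 2 :=
        fun e => zmod_two_ne_zero hn ((hinj e).symm)
      have h1 := (hcyc 0 2).mp ((hfull _ _).mpr h02)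
      rcases h1 with e | e
      · exact zmod_one_ne_zero (n := n) (by omega) (by linear_combination e)
      · exact zmod_three_ne_zero hn (by linear_combination -e)
  have hS : {n | ∃ T : Finset (Sym2 V), IsTriangulation G T ∧ T.card = n}.Nonempty :=
    ⟨_, _, hT0, rfl⟩
  obtain ⟨T', hT', hcardT'⟩ := Nat.sInf_mem hS
  have hminT : ∀ T'' : Finset (Sym2 V), IsTriangulation G T'' → T'.card ≤ T''.card := by
    intro T'' h
    rw [hcardT']
    exact Nat.sInf_le ⟨T'', h, rfl⟩
  obtain ⟨hT'edges, hH'chord⟩ := hT'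
  have hH'adj : ∀ u v, (G ⊔ SimpleGraph.fromEdgeSet (↑T' : Set (Sym2 V))).Adj u v ↔
      (G.Adj u v ∨ (s(u,v) ∈ T' ∧ u ≠ v)) := by
    intro u v
    simp [SimpleGraph.sup_adj, SimpleGraph.fromEdgeSet_adj, Finset.mem_coe]
  set H' := G ⊔ SimpleGraph.fromEdgeSet (↑T' : Set (Sym2 V)) with hH'def
  have hH'ax : H'.Adj a x := (hH'adj a x).mpr (Or.inl hax)
  have hH'ay : H'.Adj a y := (hH'adj a y).mpr (Or.inl hay)
  set M := contrG H' a x with hMdef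
  have hMchord : IsChordal M := contrG_chordal H' hH'chord a x hH'ax
  have hMa : ∀ v, ¬M.Adj a v := fun v h => h.2.1 rfl
  have hMxy : M.Adj x y := ⟨hxy, hax.ne', hay.ne', Or.inr (Or.inl ⟨rfl, hH'ay⟩)⟩
  set H := M ⊔ SimpleGraph.fromEdgeSet {s(a,x), s(a,y)} with hHdef
  have hHchord : IsChordal H := apex_chordal M hMchord a x y hMa hMxy
  have hHadj : ∀ u v : V, H.Adj u v ↔
      M.Adj u v ∨ ((s(u,v) = s(a,x) ∨ s(u,v) = s(a,y)) ∧ u ≠ v) := by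
    intro u v
    simp only [hHdef, SimpleGraph.sup_adj, SimpleGraph.fromEdgeSet_adj, Set.mem_insert_iff,
      Set.mem_singleton_iff]
  set T := Finset.univ.filter (fun e : Sym2 V => e ∈ H.edgeSet ∧ e ∉ G.edgeSet) with hTdef
  have hGH : ∀ u v, G.Adj u v → H.Adj u v := by
    intro u v h
    by_cases hu : u = a
    · subst hu
      rcases (hnbr v).mp h with rfl | rfl
      · exact (hHadj _ _).mpr (Or.inr ⟨Or.inl rfl, h.ne⟩)
      · exact (hHadj _ _).mpr (Or.inr ⟨Or.inr rfl, h.ne⟩)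
    · by_cases hv : v = a
      · subst hv
        rcases (hnbr u).mp h.symm with rfl | rfl
        · exact (hHadj _ _).mpr (Or.inr ⟨Or.inl Sym2.eq_swap, h.ne⟩)
        · exact (hHadj _ _).mpr (Or.inr ⟨Or.inr Sym2.eq_swap, h.ne⟩)
      · exact (hHadj _ _).mpr (Or.inl ⟨h.ne, hu, hv, Or.inl ((hH'adj u v).mpr (Or.inl h))⟩)
  have hHG_eq : G ⊔ SimpleGraph.fromEdgeSet (↑T : Set (Sym2 V)) = H := by
    ext u v
    constructor
    · intro h
      rcases (SimpleGraph.sup_adj _ _ _ _).mp h with h | h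
      · exact hGH u v h
      · rw [SimpleGraph.fromEdgeSet_adj] at h
        obtain ⟨hmem, hne⟩ := h
        obtain ⟨-, heH, -⟩ := Finset.mem_filter.mp (Finset.mem_coe.mp hmem)
        exact (SimpleGraph.mem_edgeSet _).mp heH
    · intro h
      by_cases hG : G.Adj u v
      · exact (SimpleGraph.sup_adj _ _ _ _).mpr (Or.inl hG)
      · refine (SimpleGraph.sup_adj _ _ _ _).mpr (Or.inr ?_)
        rw [SimpleGraph.fromEdgeSet_adj]
        refine ⟨Finset.mem_coe.mpr (Finset.mem_filter.mpr
          ⟨Finset.mem_univ _, (SimpleGraph.mem_edgeSet _).mpr h, ?_⟩), h.ne⟩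
        rw [SimpleGraph.mem_edgeSet]
        exact hG
  have hTtri : IsTriangulation G T := by
    constructor
    · intro e he
      obtain ⟨-, heH, heG⟩ := Finset.mem_filter.mp he
      exact ⟨SimpleGraph.not_isDiag_of_mem_edgeSet _ heH, heG⟩
    · rw [hHG_eq]
      exact hHchord
  have hxyT : s(x, y) ∈ T := by
    refine Finset.mem_filter.mpr ⟨Finset.mem_univ _, ?_, ?_⟩
    · exact (SimpleGraph.mem_edgeSet _).mpr ((hHadj x y).mpr (Or.inl hMxy))
    · rw [SimpleGraph.mem_edgeSet]
      exact hnadj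
  have hnoa : ∀ z : V, s(a, z) ∉ T := by
    intro z hz
    obtain ⟨-, heH, heG⟩ := Finset.mem_filter.mp hz
    have hAdj : H.Adj a z := (SimpleGraph.mem_edgeSet _).mp heH
    rcases (hHadj a z).mp hAdj with hM | ⟨hor, hne⟩
    · exact hMa z hM
    · rcases hor with h | h
      · rcases Sym2.eq_iff.mp h with ⟨-, rfl⟩ | ⟨h1, h2⟩
        · exact heG ((SimpleGraph.mem_edgeSet _).mpr hax)
        · exact hne h2.symm
      · rcases Sym2.eq_iff.mp h with ⟨-, rfl⟩ | ⟨h1, h2⟩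
        · exact heG ((SimpleGraph.mem_edgeSet _).mpr hay)
        · exact hne h2.symm
  -- cardinality bound
  set φ : Sym2 V → Sym2 V := Sym2.map (fun w => if w = a then x else w) with hφdef
  set T'A := T'.filter (fun e => a ∈ e) with hT'Adef
  set T'nonA := T'.filter (fun e => ¬ a ∈ e) with hT'nonAdef
  have hsplit : T'A.card + T'nonA.card = T'.card :=
    Finset.card_filter_add_card_filter_not _
  have hTsub : ∀ e ∈ T, e ∈ T'nonA ∨ e = s(x, y) ∨ e ∈ T'A.image φ := by
    intro e he
    revert he
    refine Sym2.ind ?_ e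
    intro u v he
    obtain ⟨-, heH, heG⟩ := Finset.mem_filter.mp he
    have hAdj : H.Adj u v := (SimpleGraph.mem_edgeSet _).mp heH
    rcases (hHadj u v).mp hAdj with hM | ⟨hor, hne⟩
    · obtain ⟨hne, hua, hva, hd⟩ := hM
      rcases hd with hH' | ⟨hux, hKv⟩ | ⟨hvx, hKu⟩
      · rcases (hH'adj u v).mp hH' with hG | ⟨hmem, -⟩
        · exact absurd ((SimpleGraph.mem_edgeSet _).mpr hG) heG
        · left
          refine Finset.mem_filter.mpr ⟨hmem, ?_⟩
          rw [Sym2.mem_iff]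
          rintro (h | h)
          · exact hua h.symm
          · exact hva h.symm
      · rcases (hH'adj a v).mp hKv with hGav | ⟨hmem, -⟩
        · rcases (hnbr v).mp hGav with rfl | rfl
          · exact absurd hux hne
          · right; left
            rw [hux]
        · right; right
          refine Finset.mem_image.mpr ⟨s(a, v), Finset.mem_filter.mpr ⟨hmem, ?_⟩, ?_⟩
          · rw [Sym2.mem_iff]; exact Or.inl rfl
          · rw [hφdef, Sym2.map_pair_eq, if_pos rfl, if_neg hva, hux]
      · rcases (hH'adj a u).mp hKu with hGau | ⟨hmem, -⟩
        · rcases (hnbr u).mp hGau with rfl | rfl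
          · exact absurd hvx.symm hne
          · right; left
            rw [hvx]
            exact Sym2.eq_swap
        · right; right
          refine Finset.mem_image.mpr ⟨s(a, u), Finset.mem_filter.mpr ⟨hmem, ?_⟩, ?_⟩
          · rw [Sym2.mem_iff]; exact Or.inl rfl
          · rw [hφdef, Sym2.map_pair_eq, if_pos rfl, if_neg hua, hvx]
            exact Sym2.eq_swap
    · exfalso
      rcases hor with h | h
      · rw [h] at heG
        exact heG ((SimpleGraph.mem_edgeSet _).mpr hax)
      · rw [h] at heG
        exact heG ((SimpleGraph.mem_edgeSet _).mpr hay)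
  have haxy : a ∉ s(x, y) := by
    rw [Sym2.mem_iff]
    rintro (h | h)
    · exact hax.ne h
    · exact hay.ne h
  have hTcard : T.card ≤ T'.card := by
    by_cases hxyT' : s(x, y) ∈ T'
    · have hsub : T ⊆ T'nonA ∪ T'A.image φ := by
        intro e he
        rcases hTsub e he with h | h | h
        · exact Finset.mem_union_left _ h
        · refine Finset.mem_union_left _ (Finset.mem_filter.mpr ⟨?_, ?_⟩)
          · rw [h]; exact hxyT'
          · rw [h]; exact haxy
        · exact Finset.mem_union_right _ h
      calc T.card ≤ (T'nonA ∪ T'A.image φ).card := Finset.card_le_card hsub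
        _ ≤ T'nonA.card + (T'A.image φ).card := Finset.card_union_le _ _
        _ ≤ T'nonA.card + T'A.card := by
            have := Finset.card_image_le (s := T'A) (f := φ)
            omega
        _ = T'.card := by omega
    · -- find a fill neighbor z of a with xz an edge of H'
      have hH'xy : ¬H'.Adj x y := by
        intro h
        rcases (hH'adj x y).mp h with h | ⟨h, -⟩
        · exact hnadj h
        · exact hxyT' h
      have hreachG : G.Reachable x y :=
        ⟨SimpleGraph.Walk.cons hax.symm (SimpleGraph.Walk.cons hay SimpleGraph.Walk.nil)⟩
      have hr0 : (deleteSet G {a}).Reachable x y := hcut x y hax.ne' hay.ne' hreachG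
      have hle : deleteSet G {a} ≤ deleteSet H' {a} := by
        intro u v h
        exact ⟨(hH'adj u v).mpr (Or.inl h.1), h.2.1, h.2.2⟩
      have hreach : (deleteSet H' {a}).Reachable x y := hr0.mono hle
      obtain ⟨z, hz1, hz2⟩ := find_common_neighbor H' hH'chord hH'ax hH'ay hH'xy hxy hreach
      have hzG : ¬ G.Adj a z := by
        intro h
        rcases (hnbr z).mp h with rfl | rfl
        · exact H'.loopless.irrefl z hz2
        · exact hH'xy hz2
      have hzT' : s(a, z) ∈ T' := by
        rcases (hH'adj a z).mp hz1 with h | ⟨h, -⟩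
        · exact absurd h hzG
        · exact h
      have hzA : s(a, z) ∈ T'A := by
        refine Finset.mem_filter.mpr ⟨hzT', ?_⟩
        rw [Sym2.mem_iff]; exact Or.inl rfl
      have hφz : φ (s(a, z)) = s(x, z) := by
        rw [hφdef, Sym2.map_pair_eq, if_pos rfl, if_neg hz1.ne']
      have hxzIm : s(x, z) ∈ T'A.image φ := Finset.mem_image.mpr ⟨s(a, z), hzA, hφz⟩
      have hsub : T ⊆ T'nonA ∪ insert (s(x, y)) ((T'A.image φ).erase (s(x, z))) := by
        intro e he
        rcases hTsub e he with h | h | h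
        · exact Finset.mem_union_left _ h
        · exact Finset.mem_union_right _ (by rw [h]; exact Finset.mem_insert_self _ _)
        · by_cases hez : e = s(x, z)
          · obtain ⟨-, heH, heG⟩ := Finset.mem_filter.mp he
            rcases (hH'adj x z).mp hz2 with hGxz | ⟨hmem', -⟩
            · exfalso
              rw [hez] at heG
              exact heG ((SimpleGraph.mem_edgeSet _).mpr hGxz)
            · refine Finset.mem_union_left _ (Finset.mem_filter.mpr ⟨?_, ?_⟩)
              · rw [hez]; exact hmem'
              · rw [hez, Sym2.mem_iff]
                rintro (h' | h')
                · exact hax.ne' h'.symm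
                · exact hz1.ne' h'.symm
          · exact Finset.mem_union_right _
              (Finset.mem_insert.mpr (Or.inr (Finset.mem_erase.mpr ⟨hez, h⟩)))
      have h1 : ((T'A.image φ).erase (s(x, z))).card = (T'A.image φ).card - 1 :=
        Finset.card_erase_of_mem hxzIm
      have h2 : (T'A.image φ).card ≤ T'A.card := Finset.card_image_le
      have h3 : 1 ≤ (T'A.image φ).card := Finset.card_pos.mpr ⟨_, hxzIm⟩
      have h4 : (insert (s(x, y)) ((T'A.image φ).erase (s(x, z)))).card ≤
          ((T'A.image φ).erase (s(x, z))).card + 1 := Finset.card_insert_le _ _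
      calc T.card ≤ (T'nonA ∪ insert (s(x, y)) ((T'A.image φ).erase (s(x, z)))).card :=
            Finset.card_le_card hsub
        _ ≤ T'nonA.card + (insert (s(x, y)) ((T'A.image φ).erase (s(x, z)))).card :=
            Finset.card_union_le _ _
        _ ≤ T'.card := by omega
  refine ⟨T, ⟨hTtri, ?_⟩, hxyT, hnoa⟩
  intro T'' hT''
  exact le_trans hTcard (hminT T'' hT'')
end
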